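/- arXiv:0708.2659 — 9 statements merged into one kernel-verified Lean document; each statement's English description precedes it below -/
import Mathlib

section
/- Let S be an ordered face structure and let a, b be distinct non-loop faces of the same dimension such that either γ(a) = γ(b) or δ̇(a) ∩ δ̇(b) ≠ ∅ (where δ̇ denotes the non-empty part of the domain). Then a and b are comparable under the upper order, i.e. a <^+ b or b <^+ a. -/
/-!  Ordered face structures, following M. Zawadowski,
"On ordered face structures and many-to-one computads".

We encode the graded set of faces as `F : ℕ → Type`, where `F (k+1)` is the set
of faces of dimension `k`, and `F 0` is an empty type playing the role of
`S₋₁`.  The codomain of a face of dimension `k+1` is a face of dimension `k`,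
and its domain `δ` is a set of elements of `F (k+1) ⊕ F k`, where `Sum.inl x`
is a genuine face `x` and `Sum.inr u` stands for the empty face `1ᵤ` on `u`.
-/

structure PreOFS where
  F : ℕ → Type
  γ : ∀ {k : ℕ}, F (k + 2) → F (k + 1)
  δ : ∀ {k : ℕ}, F (k + 2) → Set (F (k + 1) ⊕ F k)
  sim : ∀ {k : ℕ}, F (k + 1) → F (k + 1) → Prop

namespace PreOFS

variable (S : PreOFS)

/-- The genuine (non-empty) faces in the domain of `a`. -/
def realDom {k : ℕ} (a : S.F (k + 2)) : Set (S.F (k + 1)) :=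
  {x | Sum.inl x ∈ S.δ a}

/-- `a` has empty domain (`δ(a) = 1ᵤ`). -/
def isEps {k : ℕ} (a : S.F (k + 2)) : Prop :=
  ∃ u, Sum.inr u ∈ S.δ a

/-- `a` is a loop (`δ(a) = γ(a)` as sets). -/
def isLoop {k : ℕ} (a : S.F (k + 2)) : Prop :=
  S.δ a = {Sum.inl (S.γ a)}

/-- Codomain of a generalized face (`γ(1ᵤ) = u`). -/
def cod {k : ℕ} : S.F (k + 2) ⊕ S.F (k + 1) → S.F (k + 1)
  | Sum.inl x => S.γ x
  | Sum.inr u => u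

/-- Domain of a generalized face (`δ(1ᵤ) = u`). -/
def domM {k : ℕ} : S.F (k + 2) ⊕ S.F (k + 1) → Set (S.F (k + 1) ⊕ S.F k)
  | Sum.inl x => S.δ x
  | Sum.inr u => {Sum.inl u}

/-- `δ̇⁻ᵞ(a)`: the non-loop genuine faces in the domain of `a`. -/
def nlDom {k : ℕ} (a : S.F (k + 3)) : Set (S.F (k + 2)) :=
  {x | Sum.inl x ∈ S.δ a ∧ ¬ S.isLoop x}

/-- The strict upper order `<⁺`. -/
def ltP {k : ℕ} : S.F (k + 1) → S.F (k + 1) → Prop :=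
  Relation.TransGen
    (fun a b => ∃ α : S.F (k + 2), ¬ S.isLoop α ∧ Sum.inl a ∈ S.δ α ∧ S.γ α = b)

def leP {k : ℕ} (a b : S.F (k + 1)) : Prop := a = b ∨ S.ltP a b

/-- Comparability under `<⁺`. -/
def perpP {k : ℕ} (a b : S.F (k + 1)) : Prop := S.ltP a b ∨ S.ltP b a

/-- Comparability under `<∼`. -/
def perpS {k : ℕ} (a b : S.F (k + 1)) : Prop := S.sim a b ∨ S.sim b a

/-- The lower relation `<⁻`. -/
def ltM {k : ℕ} : S.F (k + 2) → S.F (k + 2) → Prop :=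
  Relation.TransGen (fun a b => Sum.inl (S.γ a) ∈ S.δ b)

/-- `θ(a) = δ(a) ∪ γ(a)` (with empty faces). -/
def thetaFull {k : ℕ} (a : S.F (k + 2)) : Set (S.F (k + 1) ⊕ S.F k) :=
  insert (Sum.inl (S.γ a)) (S.δ a)

/-- `θ̇(a)`: the genuine faces in `δ(a) ∪ γ(a)`. -/
def thetaDot {k : ℕ} (a : S.F (k + 2)) : Set (S.F (k + 1)) :=
  insert (S.γ a) (S.realDom a)

/-- `ι(b)`: the internal faces of `b`. -/
def iota {k : ℕ} (b : S.F (k + 3)) : Set (S.F (k + 1)) :=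
  {u | ∃ x ∈ S.nlDom b, ∃ y ∈ S.nlDom b, S.γ x = u ∧ u ∈ S.realDom y}

/-- `A ≡₁ B` : equality of sets of generalized faces modulo empty faces. -/
def eq1 {k : ℕ} (A B : Set (S.F (k + 2) ⊕ S.F (k + 1))) : Prop :=
  {x : S.F (k + 2) | Sum.inl x ∈ A} = {x : S.F (k + 2) | Sum.inl x ∈ B} ∧
    ({u : S.F (k + 1) | Sum.inr u ∈ A} ∪
        ⋃ x ∈ {x : S.F (k + 2) | Sum.inl x ∈ A}, S.thetaDot x) =
      ({u : S.F (k + 1) | Sum.inr u ∈ B} ∪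
        ⋃ x ∈ {x : S.F (k + 2) | Sum.inl x ∈ B}, S.thetaDot x)

end PreOFS

namespace PreOFS

/-- Iterated codomain, going down `j` dimensions. -/
def down (S : PreOFS) : ∀ (k j : ℕ), S.F (k + j + 1) → S.F (k + 1)
  | _, 0, a => a
  | k, j + 1, a => down S k j (S.γ a)

/-- `γ⁽ˡ⁾` : iterated codomain down to dimension `l`. -/
def gIter (S : PreOFS) {k : ℕ} (l : ℕ) (h : l ≤ k) (a : S.F (k + 1)) : S.F (l + 1) :=
  down S l (k - l) (_root_.cast (congrArg S.F (by omega : k + 1 = l + (k - l) + 1)) a)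

/-- The combined order `<^S`. -/
def ltS (S : PreOFS) {k : ℕ} (a b : S.F (k + 1)) : Prop :=
  S.ltP a b ∨ ∃ l : ℕ, ∃ h : l ≤ k, S.sim (S.gIter l h a) (S.gIter l h b)

end PreOFS

/-- The axioms of an ordered face structure. -/
structure IsOFS (S : PreOFS) : Prop where
  empty_bot : IsEmpty (S.F 0)
  fin : ∀ k, Finite (S.F k)
  bdd : ∃ n, ∀ k, n < k → IsEmpty (S.F k)
  nonempty₀ : Nonempty (S.F 1)
  dom_nonempty : ∀ {k : ℕ} (a : S.F (k + 2)), (S.δ a).Nonempty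
  dom_eps : ∀ {k : ℕ} (a : S.F (k + 2)) (u : S.F k),
    Sum.inr u ∈ S.δ a → S.δ a = {Sum.inr u}
  dom_dim1 : ∀ a : S.F 2, ∃ x, S.δ a = {Sum.inl x}
  glob_γ : ∀ {k : ℕ} (a : S.F (k + 3)),
    ({S.γ (S.γ a)} : Set (S.F (k + 1))) =
      {y | ∃ e ∈ S.δ a, S.cod e = y} \ (⋃ x ∈ S.nlDom a, S.realDom x)
  glob_δ_low : ∀ a : S.F 3,
    S.realDom (S.γ a) =
      (⋃ e ∈ S.δ a, {x : S.F 1 | Sum.inl x ∈ S.domM e}) \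
        {y : S.F 1 | ∃ x ∈ S.nlDom a, S.γ x = y}
  glob_δ : ∀ {k : ℕ} (a : S.F (k + 4)),
    S.eq1 (S.δ (S.γ a))
      ((⋃ e ∈ S.δ a, S.domM e) \
        {e : S.F (k + 2) ⊕ S.F (k + 1) | ∃ x ∈ S.nlDom a, Sum.inl (S.γ x) = e})
  local_disc : ∀ {k : ℕ} (a : S.F (k + 2)) (x y : S.F (k + 1)),
    Sum.inl x ∈ S.δ a → Sum.inl y ∈ S.δ a → ¬ S.ltP x y
  strictP : ∀ {k : ℕ} (x : S.F (k + 1)), ¬ S.ltP x x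
  linearP₀ : ∀ x y : S.F 1, x = y ∨ S.ltP x y ∨ S.ltP y x
  sim_irrefl : ∀ {k : ℕ} (x : S.F (k + 1)), ¬ S.sim x x
  sim_trans : ∀ {k : ℕ} (x y z : S.F (k + 1)), S.sim x y → S.sim y z → S.sim x z
  disj : ∀ {k : ℕ} (x y : S.F (k + 1)), S.perpS x y → ¬ S.perpP x y
  sim_lt_minus : ∀ {k : ℕ} (a b : S.F (k + 2)), S.sim a b → S.ltM a b
  sim_dim0 : ∀ x y : S.F 1, ¬ S.sim x y
  disj_theta : ∀ {k : ℕ} (a b : S.F (k + 2)),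
    S.thetaFull a ∩ S.thetaFull b = ∅ → (S.sim a b ↔ S.ltM a b)
  pencil₁ : ∀ {k : ℕ} (a b : S.F (k + 2)), a ≠ b →
    (S.thetaDot a ∩ S.thetaDot b).Nonempty → S.perpS a b ∨ S.perpP a b
  pencil₂ : ∀ {k : ℕ} (a b : S.F (k + 3)), S.isEps a →
    S.γ (S.γ a) ∈ S.iota b → S.sim a b ∨ S.ltP a b
  loop_fill : ∀ {k : ℕ} (x : S.F (k + 2)), S.isLoop x →
    ∃ α : S.F (k + 3), ¬ S.isLoop α ∧ S.γ α = x


private lemma ltM_up (S : PreOFS) {k : ℕ} {a b : S.F (k + 2)} (h : S.ltM a b) :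
    ∃ y, Sum.inl y ∈ S.δ b ∧ S.leP (S.γ a) y := by
  induction h with
  | single h => exact ⟨S.γ a, h, Or.inl rfl⟩
  | @tail c b h₁ h₂ ih =>
    obtain ⟨y, hy, hle⟩ := ih
    by_cases hc : S.isLoop c
    · have hyc : y = S.γ c := by
        rw [PreOFS.isLoop] at hc
        rw [hc] at hy
        simpa using hy
      exact ⟨S.γ c, h₂, hyc ▸ hle⟩
    · have hstep : S.ltP y (S.γ c) :=
        Relation.TransGen.single ⟨c, hc, hy, rfl⟩
      refine ⟨S.γ c, h₂, ?_⟩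
      rcases hle with rfl | hlt
      · exact Or.inr hstep
      · exact Or.inr (hlt.trans hstep)

private lemma no_sim (S : PreOFS) (hS : IsOFS S) {k : ℕ} {a b : S.F (k + 2)}
    (ha : ¬ S.isLoop a) (hb : ¬ S.isLoop b)
    (h : S.γ a = S.γ b ∨ (S.realDom a ∩ S.realDom b).Nonempty)
    (hsim : S.sim a b) : False := by
  obtain ⟨y, hy, hle⟩ := ltM_up S (hS.sim_lt_minus a b hsim)
  rcases h with hγ | ⟨x, hxa, hxb⟩
  · have hylt : S.ltP y (S.γ b) := Relation.TransGen.single ⟨b, hb, hy, rfl⟩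
    rw [← hγ] at hylt
    rcases hle with heq | hlt
    · exact hS.strictP y (by rw [heq] at hylt; exact hylt)
    · exact hS.strictP y (hylt.trans hlt)
  · have hxlt : S.ltP x (S.γ a) := Relation.TransGen.single ⟨a, ha, hxa, rfl⟩
    have hxy : S.ltP x y := by
      rcases hle with rfl | hlt
      · exact hxlt
      · exact hxlt.trans hlt
    exact hS.local_disc b x y hxb hy hxy

/-- distinct non-loop faces of the same dimension with equal
codomains or intersecting (non-empty) domains are `<⁺`-comparable. -/
theorem stmt3 (S : PreOFS) (hS : IsOFS S) {k : ℕ} (a b : S.F (k + 2))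
    (hab : a ≠ b) (ha : ¬ S.isLoop a) (hb : ¬ S.isLoop b)
    (h : S.γ a = S.γ b ∨ (S.realDom a ∩ S.realDom b).Nonempty) :
    S.ltP a b ∨ S.ltP b a := by
  by_contra hnp
  have hθ : (S.thetaDot a ∩ S.thetaDot b).Nonempty := by
    rcases h with hγ | ⟨x, hxa, hxb⟩
    · exact ⟨S.γ a, Set.mem_insert _ _, hγ ▸ Set.mem_insert _ _⟩
    · exact ⟨x, Set.mem_insert_iff.mpr (Or.inr hxa), Set.mem_insert_iff.mpr (Or.inr hxb)⟩
  rcases hS.pencil₁ a b hab hθ with hs | hp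
  · rcases hs with hs | hs
    · exact no_sim S hS ha hb h hs
    · refine no_sim S hS hb ha ?_ hs
      rcases h with hγ | hd
      · exact Or.inl hγ.symm
      · exact Or.inr (Set.inter_comm _ _ ▸ hd)
  · exact hnp hp
end

section
/- Let S be an ordered face structure and a a face of dimension at least 1. Then γ(a) is a loop if and only if either every face in δ(a) is a loop, or a has empty domain. -/
/-- No cycles: on a finite type, if `TransGen gen` is irreflexive, there is no
nonempty set every element of which has a `gen`-successor in the set. -/
lemma no_cycle_aux {β : Type} [Finite β] (gen : β → β → Prop)
    (hirr : ∀ x : β, ¬ Relation.TransGen gen x x)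
    (T : Set β) (hne : T.Nonempty) (hstep : ∀ t ∈ T, ∃ t' ∈ T, gen t t') : False := by
  haveI ht : IsTrans β (fun a b : β => Relation.TransGen gen b a) :=
    ⟨fun a b c h1 h2 => Relation.TransGen.trans h2 h1⟩
  haveI hi : IsIrrefl β (fun a b : β => Relation.TransGen gen b a) := ⟨hirr⟩
  have hw := Finite.wellFounded_of_trans_of_irrefl
    (fun a b : β => Relation.TransGen gen b a)
  obtain ⟨m, hm, hmin⟩ := hw.has_min T hne
  obtain ⟨t', ht', hgen⟩ := hstep m hm
  exact hmin t' ht' (Relation.TransGen.single hgen)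

/-- A face whose real domain is exactly its codomain, is a loop. -/
lemma loop_of_realDom (S : PreOFS) (hS : IsOFS S) {k : ℕ} (b : S.F (k + 2))
    (h : S.realDom b = {S.γ b}) : S.isLoop b := by
  have hγ : Sum.inl (S.γ b) ∈ S.δ b := by
    have : S.γ b ∈ S.realDom b := by rw [h]; rfl
    exact this
  ext e
  constructor
  · intro he
    cases e with
    | inl y =>
        have : y ∈ S.realDom b := he
        rw [h] at this
        simpa using this
    | inr u =>
        have hδ := hS.dom_eps b u he
        rw [hδ] at hγ
        simp at hγ
  · intro he
    simp only [Set.mem_singleton_iff] at he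
    subst he
    exact hγ

/-- The first-component consequence of the globularity axiom for `δ`, stated
uniformly in the dimension. -/
lemma key_dom (S : PreOFS) (hS : IsOFS S) :
    ∀ {k : ℕ} (a : S.F (k + 3)),
      S.realDom (S.γ a) =
        {y | Sum.inl y ∈ ⋃ e ∈ S.δ a, S.domM e} \
          {y | ∃ x ∈ S.nlDom a, S.γ x = y}
  | 0, a => by
      have h := hS.glob_δ_low a
      rw [h]
      ext y
      simp [Set.mem_iUnion]
  | (k + 1), a => by
      have h := (hS.glob_δ a).1
      have h1 : S.realDom (S.γ a) = {x | Sum.inl x ∈ S.δ (S.γ a)} := rfl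
      rw [h1, h]
      ext y
      simp only [Set.mem_setOf_eq, Set.mem_diff, Set.mem_diff, Set.mem_setOf_eq]
      constructor
      · rintro ⟨hA, hB⟩
        exact ⟨hA, fun ⟨x, hx, hxy⟩ => hB ⟨x, hx, by rw [hxy]⟩⟩
      · rintro ⟨hA, hB⟩
        exact ⟨hA, fun ⟨x, hx, hxy⟩ => hB ⟨x, hx, by injection hxy⟩⟩

/-- If `a` has no non-loop genuine faces in its domain, then `γ a` is a loop. -/
lemma loop_of_nlDom_empty (S : PreOFS) (hS : IsOFS S) {k : ℕ} (a : S.F (k + 3))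
    (hnl : S.nlDom a = ∅) : S.isLoop (S.γ a) := by
  have hg := hS.glob_γ a
  have hcod : ({S.γ (S.γ a)} : Set (S.F (k + 1))) = {y | ∃ e ∈ S.δ a, S.cod e = y} := by
    rw [hg, hnl]
    simp
  have hkey := key_dom S hS a
  rw [hnl] at hkey
  apply loop_of_realDom S hS
  rw [hkey, hcod]
  ext y
  simp only [Set.mem_diff, Set.mem_setOf_eq, Set.mem_iUnion]
  constructor
  · rintro ⟨⟨e, he, hye⟩, -⟩
    refine ⟨e, he, ?_⟩
    cases e with
    | inl x =>
        have hx : ¬ (Sum.inl x ∈ S.δ a ∧ ¬ S.isLoop x) := by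
          intro hmem
          have : x ∈ S.nlDom a := hmem
          rw [hnl] at this
          exact this
        have hxloop : S.isLoop x := by
          by_contra hc
          exact hx ⟨he, hc⟩
        have : S.domM (Sum.inl x) = S.δ x := rfl
        rw [this, hxloop] at hye
        simpa [PreOFS.cod] using hye.symm
    | inr u =>
        have : S.domM (Sum.inr u) = {Sum.inl u} := rfl
        rw [this] at hye
        simp only [Set.mem_singleton_iff, Sum.inl.injEq] at hye
        simpa [PreOFS.cod] using hye.symm
  · rintro ⟨e, he, hey⟩
    constructor
    · refine ⟨e, he, ?_⟩
      cases e with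
      | inl x =>
          have hxloop : S.isLoop x := by
            by_contra hc
            have : x ∈ S.nlDom a := ⟨he, hc⟩
            rw [hnl] at this
            exact this
          have : S.domM (Sum.inl x) = S.δ x := rfl
          rw [this, hxloop]
          simpa [PreOFS.cod] using hey.symm
      | inr u =>
          have : S.domM (Sum.inr u) = {Sum.inl u} := rfl
          rw [this]
          simpa [PreOFS.cod] using hey.symm
    · rintro ⟨x, hx, -⟩
      exact hx

/-- `γ(a)` is a loop iff every face in `δ(a)` is a loop or `a`
has empty domain. -/
theorem stmt5 (S : PreOFS) (hS : IsOFS S) {k : ℕ} (a : S.F (k + 3)) :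
    S.isLoop (S.γ a) ↔
      ((∀ x : S.F (k + 2), Sum.inl x ∈ S.δ a → S.isLoop x) ∨ S.isEps a) := by
  constructor
  · intro hloop
    by_cases heps : S.isEps a
    · exact Or.inr heps
    refine Or.inl ?_
    intro x hx
    by_contra hnl
    have hxnl : x ∈ S.nlDom a := ⟨hx, hnl⟩
    -- γγa is in the real domain of γa
    have h1 : S.γ (S.γ a) ∈ S.realDom (S.γ a) := by
      have : S.realDom (S.γ a) = {z | Sum.inl z ∈ S.δ (S.γ a)} := rfl
      rw [this, hloop]
      simp
    have hkey := key_dom S hS a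
    rw [hkey] at h1
    have h2 : ¬ ∃ z ∈ S.nlDom a, S.γ z = S.γ (S.γ a) := h1.2
    have hg := hS.glob_γ a
    -- the step: every non-loop face's codomain sits in the domain of another
    -- non-loop face of δ(a)
    have hstep : ∀ z ∈ S.nlDom a, ∃ w ∈ S.nlDom a, Sum.inl (S.γ z) ∈ S.δ w := by
      intro z hz
      have hz1 : S.γ z ∈ {y | ∃ e ∈ S.δ a, S.cod e = y} := ⟨Sum.inl z, hz.1, rfl⟩
      have hz2 : S.γ z ∉ ({S.γ (S.γ a)} : Set (S.F (k + 1))) := by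
        intro h
        exact h2 ⟨z, hz, by simpa using h⟩
      rw [hg] at hz2
      have : S.γ z ∈ ⋃ w ∈ S.nlDom a, S.realDom w := by
        by_contra hc
        exact hz2 ⟨hz1, hc⟩
      simpa [Set.mem_iUnion, PreOFS.realDom] using this
    -- no-cycle argument
    haveI : Finite (S.F (k + 1)) := hS.fin (k + 1)
    refine no_cycle_aux
      (fun p q : S.F (k + 1) =>
        ∃ α : S.F (k + 2), ¬ S.isLoop α ∧ Sum.inl p ∈ S.δ α ∧ S.γ α = q)
      (fun p => hS.strictP p)
      {p | ∃ z ∈ S.nlDom a, S.γ z = p} ⟨S.γ x, x, hxnl, rfl⟩ ?_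
    rintro t ⟨z, hz, rfl⟩
    obtain ⟨w, hw, hmem⟩ := hstep z hz
    exact ⟨S.γ w, ⟨w, hw, rfl⟩, ⟨w, hw.2, hmem, rfl⟩⟩
  · intro h
    apply loop_of_nlDom_empty S hS
    ext z
    simp only [Set.mem_empty_iff_false, iff_false]
    rintro ⟨hz, hznl⟩
    cases h with
    | inl hall => exact hznl (hall z hz)
    | inr heps =>
        obtain ⟨u, hu⟩ := heps
        rw [hS.dom_eps a u hu] at hz
        simp at hz
end

section
/- Let S be an ordered face structure and a, b faces of the same dimension with a <^+ b. If b is a loop then a is a loop. -/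
private lemma factA (S : PreOFS) (hS : IsOFS S) {k : ℕ} (α : S.F (k + 3))
    (hb : S.isLoop (S.γ α)) : ∀ x ∈ S.nlDom α, S.γ x ≠ S.γ (S.γ α) := by
  intro x hx hxe
  rw [PreOFS.isLoop] at hb
  cases k with
  | zero =>
      have hgl := hS.glob_δ_low α
      have hmem : S.γ (S.γ α) ∈ S.realDom (S.γ α) := by
        simp [PreOFS.realDom, hb]
      rw [hgl] at hmem
      exact hmem.2 ⟨x, hx, hxe⟩
  | succ k =>
      have hgl := (hS.glob_δ α).1
      have hmem : S.γ (S.γ α) ∈ {x : S.F (k + 2) | Sum.inl x ∈ S.δ (S.γ α)} := by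
        simp [hb]
      rw [hgl] at hmem
      exact hmem.2 ⟨x, hx, congrArg Sum.inl hxe⟩

private lemma key (S : PreOFS) (hS : IsOFS S) {k : ℕ} (α : S.F (k + 3))
    (a : S.F (k + 2)) (ha : Sum.inl a ∈ S.δ α) (hb : S.isLoop (S.γ α)) :
    S.isLoop a := by
  by_contra hal
  have haN : a ∈ S.nlDom α := ⟨ha, hal⟩
  -- Fact B/C: every x ∈ nlDom α has γ x <⁺ γ y for some y ∈ nlDom α
  have factC : ∀ x ∈ S.nlDom α, ∃ y ∈ S.nlDom α, S.ltP (S.γ x) (S.γ y) := by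
    intro x hx
    have hcod : S.γ x ∈ {y | ∃ e ∈ S.δ α, S.cod e = y} :=
      ⟨Sum.inl x, hx.1, rfl⟩
    have hγ := hS.glob_γ α
    by_cases hU : S.γ x ∈ ⋃ y ∈ S.nlDom α, S.realDom y
    · rcases Set.mem_iUnion₂.1 hU with ⟨y, hy, hmy⟩
      exact ⟨y, hy, Relation.TransGen.single ⟨y, hy.2, hmy, rfl⟩⟩
    · have : S.γ x ∈ ({S.γ (S.γ α)} : Set (S.F (k + 1))) := by
        rw [hγ]; exact ⟨hcod, hU⟩
      exact absurd this.out (factA S hS α hb x hx)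
  -- well-foundedness of the flipped strict order on a finite type
  haveI : Finite (S.F (k + 1)) := hS.fin (k + 1)
  haveI : IsTrans (S.F (k + 1)) (fun u v => S.ltP v u) :=
    ⟨fun _ _ _ h1 h2 => Relation.TransGen.trans h2 h1⟩
  haveI : IsIrrefl (S.F (k + 1)) (fun u v => S.ltP v u) := ⟨fun x => hS.strictP x⟩
  have hwf : WellFounded (fun u v : S.F (k + 1) => S.ltP v u) :=
    Finite.wellFounded_of_trans_of_irrefl _
  obtain ⟨m, ⟨x₀, hx₀, rfl⟩, hmin⟩ :=
    hwf.has_min ((fun x => S.γ x) '' S.nlDom α) ⟨S.γ a, a, haN, rfl⟩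
  obtain ⟨y, hy, hlt⟩ := factC x₀ hx₀
  exact hmin (S.γ y) ⟨y, hy, rfl⟩ hlt

/-- if `a <⁺ b` and `b` is a loop then `a` is a loop. -/
theorem stmt6 (S : PreOFS) (hS : IsOFS S) {k : ℕ} (a b : S.F (k + 2))
    (h : S.ltP a b) (hb : S.isLoop b) : S.isLoop a := by
  induction h with
  | single hr =>
      obtain ⟨α, -, ha, hγ⟩ := hr
      exact key S hS α a ha (hγ ▸ hb)
  | tail h' step ih =>
      obtain ⟨α, -, hc, hγ⟩ := step
      exact ih (key S hS α _ hc (hγ ▸ hb))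
end

section
/- Let S be an ordered face structure and a a face of S. Then the set { b ∈ S : a ≤^+ b } is linearly ordered by ≤^+. -/
namespace OFSAux

variable {S : PreOFS}

lemma leP_refl {k : ℕ} (a : S.F (k + 1)) : S.leP a a := Or.inl rfl

lemma leP_trans {k : ℕ} {a b c : S.F (k + 1)} (h1 : S.leP a b) (h2 : S.leP b c) :
    S.leP a c := by
  rcases h1 with rfl | h1
  · exact h2
  rcases h2 with rfl | h2
  · exact Or.inr h1
  · exact Or.inr (h1.trans h2)

lemma flip_ltP_wf (hS : IsOFS S) (k : ℕ) :
    WellFounded (fun x y : S.F (k + 1) => S.ltP y x) := by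
  haveI := hS.fin (k + 1)
  haveI : IsIrrefl (S.F (k + 1)) (fun x y => S.ltP y x) := ⟨fun x h => hS.strictP x h⟩
  haveI : IsTrans (S.F (k + 1)) (fun x y => S.ltP y x) :=
    ⟨fun _ _ _ h1 h2 => Relation.TransGen.trans h2 h1⟩
  exact Finite.wellFounded_of_trans_of_irrefl _

/-- Descent lemma: the codomain of any face in the domain of `A`
is `≤⁺` the codomain of the codomain of `A`. -/
lemma lemA (hS : IsOFS S) {k : ℕ} (A : S.F (k + 3)) :
    ∀ x : S.F (k + 2), Sum.inl x ∈ S.δ A → S.leP (S.γ x) (S.γ (S.γ A)) := by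
  have wf : WellFounded (InvImage (fun x y : S.F (k + 1) => S.ltP y x) S.γ) :=
    InvImage.wf _ (flip_ltP_wf hS k)
  intro x hx
  refine wf.induction (C := fun x => Sum.inl x ∈ S.δ A → S.leP (S.γ x) (S.γ (S.γ A)))
    x ?_ hx
  intro z IH hz
  by_cases hmem : S.γ z ∈ ⋃ y ∈ S.nlDom A, S.realDom y
  · obtain ⟨y, hyA, hy⟩ : ∃ y ∈ S.nlDom A, S.γ z ∈ S.realDom y := by
      simpa using hmem
    have step : S.ltP (S.γ z) (S.γ y) :=
      Relation.TransGen.single ⟨y, hyA.2, hy, rfl⟩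
    have hrec := IH y step hyA.1
    rcases hrec with h | h
    · exact Or.inr (h ▸ step)
    · exact Or.inr (step.trans h)
  · have hmem2 : S.γ z ∈ ({y | ∃ e ∈ S.δ A, S.cod e = y} \
        ⋃ y ∈ S.nlDom A, S.realDom y) :=
      ⟨⟨Sum.inl z, hz, rfl⟩, hmem⟩
    rw [← hS.glob_γ A] at hmem2
    exact Or.inl hmem2

lemma lemB (hS : IsOFS S) {k : ℕ} {α β : S.F (k + 2)} (h : S.ltP α β) :
    S.leP (S.γ α) (S.γ β) := by
  induction h with
  | single h =>
      obtain ⟨A, _, hmem, hgam⟩ := h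
      exact hgam ▸ lemA hS A _ hmem
  | tail _ h ih =>
      obtain ⟨A, _, hmem, hgam⟩ := h
      exact leP_trans ih (hgam ▸ lemA hS A _ hmem)

lemma lemM (hS : IsOFS S) {k : ℕ} {α β : S.F (k + 2)} (h : S.ltM α β) :
    S.leP (S.γ α) (S.γ β) := by
  have step : ∀ {a b : S.F (k + 2)}, Sum.inl (S.γ a) ∈ S.δ b →
      S.leP (S.γ a) (S.γ b) := by
    intro a b hab
    by_cases hb : S.isLoop b
    · have hb' : S.δ b = {Sum.inl (S.γ b)} := hb
      rw [hb'] at hab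
      exact Or.inl (Sum.inl.inj hab)
    · exact Or.inr (Relation.TransGen.single ⟨b, hb, hab, rfl⟩)
  induction h with
  | single h => exact step h
  | tail _ h ih => exact leP_trans ih (step h)

/-- Pencil linearity: two faces sharing a domain face have comparable codomains. -/
lemma keycomp (hS : IsOFS S) {k : ℕ} {a : S.F (k + 1)} {α β : S.F (k + 2)}
    (hα : Sum.inl a ∈ S.δ α) (hβ : Sum.inl a ∈ S.δ β) :
    S.leP (S.γ α) (S.γ β) ∨ S.leP (S.γ β) (S.γ α) := by
  by_cases h : α = β
  · subst h; exact Or.inl (leP_refl _)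
  have hdot : (S.thetaDot α ∩ S.thetaDot β).Nonempty :=
    ⟨a, Set.mem_insert_of_mem _ hα, Set.mem_insert_of_mem _ hβ⟩
  rcases hS.pencil₁ α β h hdot with hs | hp
  · rcases hs with hs | hs
    · exact Or.inl (lemM hS (hS.sim_lt_minus _ _ hs))
    · exact Or.inr (lemM hS (hS.sim_lt_minus _ _ hs))
  · rcases hp with hp | hp
    · exact Or.inl (lemB hS hp)
    · exact Or.inr (lemB hS hp)

lemma mainLin (hS : IsOFS S) {k : ℕ} :
    ∀ a b c : S.F (k + 1), S.ltP a b → S.ltP a c → S.leP b c ∨ S.leP c b := by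
  have wf := flip_ltP_wf hS k
  intro a
  refine wf.induction
    (C := fun a => ∀ b c, S.ltP a b → S.ltP a c → S.leP b c ∨ S.leP c b) a ?_
  intro a IH b c hb hc
  have hb' : ∃ b₁, (∃ α : S.F (k + 2), ¬ S.isLoop α ∧ Sum.inl a ∈ S.δ α ∧ S.γ α = b₁)
      ∧ S.leP b₁ b := by
    obtain ⟨b₁, h1, h2⟩ := Relation.TransGen.head'_iff.mp hb
    rcases Relation.reflTransGen_iff_eq_or_transGen.mp h2 with rfl | h2
    · exact ⟨b, h1, leP_refl _⟩
    · exact ⟨b₁, h1, Or.inr h2⟩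
  have hc' : ∃ c₁, (∃ β : S.F (k + 2), ¬ S.isLoop β ∧ Sum.inl a ∈ S.δ β ∧ S.γ β = c₁)
      ∧ S.leP c₁ c := by
    obtain ⟨c₁, h1, h2⟩ := Relation.TransGen.head'_iff.mp hc
    rcases Relation.reflTransGen_iff_eq_or_transGen.mp h2 with rfl | h2
    · exact ⟨c, h1, leP_refl _⟩
    · exact ⟨c₁, h1, Or.inr h2⟩
  obtain ⟨b₁, ⟨α, hαl, hαa, hαγ⟩, hb₁b⟩ := hb'
  obtain ⟨c₁, ⟨β, hβl, hβa, hβγ⟩, hc₁c⟩ := hc'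
  have hab₁ : S.ltP a b₁ := Relation.TransGen.single ⟨α, hαl, hαa, hαγ⟩
  have hac₁ : S.ltP a c₁ := Relation.TransGen.single ⟨β, hβl, hβa, hβγ⟩
  have comp : S.leP b₁ c₁ ∨ S.leP c₁ b₁ := by
    have := keycomp hS hαa hβa
    rwa [hαγ, hβγ] at this
  have aux : ∀ b c b₁ : S.F (k + 1), S.ltP a b₁ → S.leP b₁ b → S.leP b₁ c →
      S.leP b c ∨ S.leP c b := by
    intro b c b₁ hab₁ h1 h2
    rcases h1 with rfl | h1
    · exact Or.inl h2
    rcases h2 with rfl | h2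
    · exact Or.inr (Or.inr h1)
    exact IH b₁ hab₁ b c h1 h2
  rcases comp with h | h
  · exact aux b c b₁ hab₁ hb₁b (leP_trans h hc₁c)
  · exact (aux c b c₁ hac₁ hc₁c (leP_trans h hb₁b)).symm

end OFSAux

/-- the set `{b | a ≤⁺ b}` is linearly ordered by `≤⁺`. -/
theorem stmt7 (S : PreOFS) (hS : IsOFS S) {k : ℕ} (a : S.F (k + 1)) :
    (∀ b c : S.F (k + 1), S.leP a b → S.leP a c → S.leP b c ∨ S.leP c b) ∧
    (∀ b c : S.F (k + 1), S.leP a b → S.leP a c →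
      S.leP b c → S.leP c b → b = c) := by
  constructor
  · intro b c hab hac
    rcases hab with rfl | hab
    · exact Or.inl hac
    rcases hac with rfl | hac
    · exact Or.inr (Or.inr hab)
    exact OFSAux.mainLin hS a b c hab hac
  · intro b c _ _ hbc hcb
    rcases hbc with rfl | hbc
    · rfl
    rcases hcb with rfl | hcb
    · rfl
    exact absurd (hbc.trans hcb) (hS.strictP b)
end

section
/- Let S be an ordered face structure and a, b, c faces of the same dimension. If a <^+ b and b <^∼ c then a <^∼ c. -/
section Aux

variable {S : PreOFS} (hS : IsOFS S)

lemma leP_trans {k : ℕ} {x y z : S.F (k+1)} (h1 : S.leP x y) (h2 : S.leP y z) : S.leP x z := by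
  rcases h1 with rfl | h1
  · exact h2
  rcases h2 with rfl | h2
  · exact Or.inr h1
  · exact Or.inr (h1.trans h2)

lemma rtg_leP {k : ℕ} {x y : S.F (k+1)}
    (h : Relation.ReflTransGen
      (fun a b => ∃ α : S.F (k + 2), ¬ S.isLoop α ∧ Sum.inl a ∈ S.δ α ∧ S.γ α = b) x y) :
    S.leP x y := by
  induction h with
  | refl => exact Or.inl rfl
  | tail _ h2 ih => exact leP_trans ih (Or.inr (Relation.TransGen.single h2))

lemma ltP_head {k : ℕ} {a b : S.F (k+1)} (h : S.ltP a b) :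
    ∃ s, (∃ α : S.F (k + 2), ¬ S.isLoop α ∧ Sum.inl a ∈ S.δ α ∧ S.γ α = s) ∧ S.leP s b := by
  obtain ⟨s, h1, h2⟩ := Relation.TransGen.head'_iff.mp h
  exact ⟨s, h1, rtg_leP h2⟩

include hS

lemma wfGT (k : ℕ) : WellFounded (fun x y : S.F (k+1) => S.ltP y x) := by
  haveI := hS.fin (k+1)
  haveI : IsTrans (S.F (k+1)) (fun x y => S.ltP y x) := ⟨fun a b c h1 h2 => h2.trans h1⟩
  haveI : IsIrrefl (S.F (k+1)) (fun x y : S.F (k+1) => S.ltP y x) := ⟨fun a => hS.strictP a⟩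
  exact Finite.wellFounded_of_trans_of_irrefl _

lemma wfGTγ (k : ℕ) : WellFounded (fun x y : S.F (k+2) => S.ltP (S.γ y) (S.γ x)) := by
  have h := InvImage.wf S.γ (wfGT hS k)
  unfold InvImage at h
  exact h

/-- From globularity: the codomain of any face in `δ Γ` is `≤⁺ γ (γ Γ)`. -/
lemma gamma_le {k : ℕ} (Γ : S.F (k+3)) :
    ∀ x : S.F (k+2), Sum.inl x ∈ S.δ Γ → S.leP (S.γ x) (S.γ (S.γ Γ)) := by
  intro x
  refine (wfGTγ hS k).induction
    (C := fun x => Sum.inl x ∈ S.δ Γ → S.leP (S.γ x) (S.γ (S.γ Γ))) x ?_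
  intro x ih hx
  have hg := hS.glob_γ Γ
  by_cases hvx : S.γ x = S.γ (S.γ Γ)
  · exact Or.inl hvx
  · have hA : S.γ x ∈ {y | ∃ e ∈ S.δ Γ, S.cod e = y} := ⟨Sum.inl x, hx, rfl⟩
    have hB : S.γ x ∈ ⋃ z ∈ S.nlDom Γ, S.realDom z := by
      by_contra hB
      have hmem : S.γ x ∈ ({S.γ (S.γ Γ)} : Set (S.F (k+1))) := by
        rw [hg]; exact ⟨hA, hB⟩
      exact hvx hmem
    simp only [Set.mem_iUnion] at hB
    obtain ⟨z, hz, hvz⟩ := hB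
    have h1 : S.ltP (S.γ x) (S.γ z) :=
      Relation.TransGen.single ⟨z, hz.2, hvz, rfl⟩
    exact leP_trans (Or.inr h1) (ih z h1 hz.1)

lemma ltP_gamma {k : ℕ} {x y : S.F (k+2)} (h : S.ltP x y) : S.leP (S.γ x) (S.γ y) := by
  induction h with
  | single h => obtain ⟨Γ, _, hx, hΓ⟩ := h; exact hΓ ▸ gamma_le hS Γ x hx
  | tail _ h ih =>
      obtain ⟨Γ, _, hx, hΓ⟩ := h
      exact leP_trans ih (hΓ ▸ gamma_le hS Γ _ hx)

lemma ltM_step_gamma {k : ℕ} {a b : S.F (k+2)} (h : Sum.inl (S.γ a) ∈ S.δ b) :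
    S.leP (S.γ a) (S.γ b) := by
  by_cases hl : S.isLoop b
  · left
    rw [hl] at h
    simpa using h
  · exact Or.inr (Relation.TransGen.single ⟨b, hl, h, rfl⟩)

lemma ltM_gamma {k : ℕ} {x y : S.F (k+2)} (h : S.ltM x y) : S.leP (S.γ x) (S.γ y) := by
  induction h with
  | single h => exact ltM_step_gamma hS h
  | tail _ h ih => exact leP_trans ih (ltM_step_gamma hS h)

/-- Nothing is `<⁻` below a face with an empty face in its domain. -/
lemma no_ltM_eps {k : ℕ} {x c : S.F (k+2)} {u : S.F k}
    (hu : Sum.inr u ∈ S.δ c) (h : S.ltM x c) : False := by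
  have hd := hS.dom_eps c u hu
  cases h with
  | single h => rw [hd] at h; simpa using h
  | tail _ h => rw [hd] at h; simpa using h

/-- Reaching `e` by `<⁻` from any face of `δ Γ`, provided `γ (γ Γ) ∈ δ e`. -/
lemma ltM_reach {k : ℕ} (Γ : S.F (k+3)) (e : S.F (k+2))
    (he : Sum.inl (S.γ (S.γ Γ)) ∈ S.δ e) :
    ∀ x : S.F (k+2), Sum.inl x ∈ S.δ Γ → S.ltM x e := by
  intro x
  refine (wfGTγ hS k).induction
    (C := fun x => Sum.inl x ∈ S.δ Γ → S.ltM x e) x ?_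
  intro x ih hx
  by_cases hvx : S.γ x = S.γ (S.γ Γ)
  · exact Relation.TransGen.single (by rw [hvx]; exact he)
  · have hg := hS.glob_γ Γ
    have hA : S.γ x ∈ {y | ∃ e ∈ S.δ Γ, S.cod e = y} := ⟨Sum.inl x, hx, rfl⟩
    have hB : S.γ x ∈ ⋃ z ∈ S.nlDom Γ, S.realDom z := by
      by_contra hB
      have hmem : S.γ x ∈ ({S.γ (S.γ Γ)} : Set (S.F (k+1))) := by
        rw [hg]; exact ⟨hA, hB⟩
      exact hvx hmem
    simp only [Set.mem_iUnion] at hB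
    obtain ⟨z, hz, hvz⟩ := hB
    have h1 : S.ltP (S.γ x) (S.γ z) :=
      Relation.TransGen.single ⟨z, hz.2, hvz, rfl⟩
    exact Relation.TransGen.head hvz (ih z h1 hz.1)

/-- No common `<⁺`-lower bound for `⊥⁺`-incomparable distinct faces. -/
lemma noVee {k : ℕ} {b c : S.F (k+1)} (hne : b ≠ c)
    (h1 : ¬ S.ltP b c) (h2 : ¬ S.ltP c b) :
    ∀ a, ¬ (S.ltP a b ∧ S.ltP a c) := by
  intro a
  refine (wfGT hS k).induction
    (C := fun a => ¬ (S.ltP a b ∧ S.ltP a c)) a ?_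
  rintro a ih ⟨hab, hac⟩
  have resolve : ∀ s, S.ltP a s → S.leP s b → S.leP s c → False := by
    intro s has hsb hsc
    rcases hsb with rfl | hsb
    · rcases hsc with rfl | hsc
      · exact hne rfl
      · exact h1 hsc
    · rcases hsc with rfl | hsc
      · exact h2 hsb
      · exact ih s has ⟨hsb, hsc⟩
  obtain ⟨s, ⟨α, hαnl, haα, hαs⟩, hsb⟩ := ltP_head hab
  obtain ⟨t, ⟨β, hβnl, haβ, hβt⟩, htc⟩ := ltP_head hac
  have has : S.ltP a s := Relation.TransGen.single ⟨α, hαnl, haα, hαs⟩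
  have hat : S.ltP a t := Relation.TransGen.single ⟨β, hβnl, haβ, hβt⟩
  by_cases hαβ : α = β
  · subst hαβ
    have hst : s = t := by rw [← hαs, hβt]
    exact resolve s has hsb (hst ▸ htc)
  · have hcom : (S.thetaDot α ∩ S.thetaDot β).Nonempty :=
      ⟨a, Set.mem_insert_of_mem _ haα, Set.mem_insert_of_mem _ haβ⟩
    have hst : S.leP s t → False := fun h =>
      resolve s has hsb (leP_trans h htc)
    have hts : S.leP t s → False := fun h =>
      resolve t hat (leP_trans h hsb) htc
    rcases hS.pencil₁ α β hαβ hcom with (h | h) | (h | h)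
    · exact hst (hαs ▸ hβt ▸ ltM_gamma hS (hS.sim_lt_minus α β h))
    · exact hts (hαs ▸ hβt ▸ ltM_gamma hS (hS.sim_lt_minus β α h))
    · exact hst (hαs ▸ hβt ▸ ltP_gamma hS h)
    · exact hts (hαs ▸ hβt ▸ ltP_gamma hS h)

lemma full_to_dot {k : ℕ} {x : S.F (k+1)} {a : S.F (k+2)}
    (h : Sum.inl x ∈ S.thetaFull a) : x ∈ S.thetaDot a := by
  rcases Set.mem_insert_iff.mp h with h | h
  · obtain rfl : x = S.γ a := Sum.inl.inj h
    exact Set.mem_insert _ _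
  · exact Set.mem_insert_of_mem _ h

/-- The one-step case of Statement 8. -/
lemma core {m : ℕ} (a b c : S.F (m+2)) (α : S.F (m+3)) (hnl : ¬ S.isLoop α)
    (ha : Sum.inl a ∈ S.δ α) (hb : S.γ α = b) (hbc : S.sim b c) : S.sim a c := by
  have hab : S.ltP a b := Relation.TransGen.single ⟨α, hnl, ha, hb⟩
  have hne : b ≠ c := fun h => hS.sim_irrefl b (h ▸ hbc)
  have hnp : ¬ S.perpP b c := hS.disj b c (Or.inl hbc)
  have hnbc : ¬ S.ltP b c := fun h => hnp (Or.inl h)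
  have hncb : ¬ S.ltP c b := fun h => hnp (Or.inr h)
  have hMbc : S.ltM b c := hS.sim_lt_minus b c hbc
  have hMac : S.ltM a c := by
    obtain ⟨e, he, hec⟩ := Relation.TransGen.head'_iff.mp hMbc
    have hreach : S.ltM a e := ltM_reach hS α e (by rw [hb]; exact he) a ha
    exact Relation.TransGen.trans_left hreach hec
  by_cases hθ : S.thetaFull a ∩ S.thetaFull c = ∅
  · exact (hS.disj_theta a c hθ).mpr hMac
  · obtain ⟨e, hea, hec⟩ := Set.nonempty_iff_ne_empty.mpr hθ
    cases e with
    | inr u =>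
      have hu : Sum.inr u ∈ S.δ c := by
        rcases Set.mem_insert_iff.mp hec with h | h
        · cases h
        · exact h
      exact absurd hMac (fun h => no_ltM_eps hS hu h)
    | inl x =>
      have hxa : x ∈ S.thetaDot a := full_to_dot hS hea
      have hxc : x ∈ S.thetaDot c := full_to_dot hS hec
      have hac : a ≠ c := fun h => hncb (h ▸ hab)
      rcases hS.pencil₁ a c hac ⟨x, hxa, hxc⟩ with (h | h) | (h | h)
      · exact h
      · exact absurd (Or.inl hab)
          (hS.disj a b (Or.inr (hS.sim_trans b c a hbc h)))
      · exact absurd ⟨hab, h⟩ (noVee hS hne hnbc hncb a)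
      · exact absurd (h.trans hab) hncb

end Aux

/-- if `a <⁺ b` and `b <∼ c` then `a <∼ c`. -/

theorem stmt8 (S : PreOFS) (hS : IsOFS S) {k : ℕ} (a b c : S.F (k + 1))
    (h1 : S.ltP a b) (h2 : S.sim b c) : S.sim a c := by
  cases k with
  | zero => exact absurd h2 (hS.sim_dim0 b c)
  | succ m =>
    induction h1 using Relation.TransGen.head_induction_on with
    | single h =>
      obtain ⟨α, hnl, ha, hb⟩ := h
      exact core hS _ _ _ α hnl ha hb h2
    | head h _ ih =>
      obtain ⟨α, hnl, ha, hb⟩ := h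
      exact core hS _ _ _ α hnl ha hb ih
end

section
/- Let S be an ordered face structure and a, b, c faces of the same dimension. If a <^∼ b and b <^+ c then a <^∼ c or a <^+ c. -/
namespace OFSProof
open PreOFS
variable {S : PreOFS} (hS : IsOFS S)

section Basics
variable {k : ℕ}

lemma ltP_trans {a b c : S.F (k+1)} (h1 : S.ltP a b) (h2 : S.ltP b c) : S.ltP a c :=
  Relation.TransGen.trans h1 h2

lemma leP_ltP {a b c : S.F (k+1)} (h1 : S.leP a b) (h2 : S.ltP b c) : S.ltP a c := by
  rcases h1 with rfl | h1; exact h2; exact ltP_trans h1 h2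

lemma ltP_leP {a b c : S.F (k+1)} (h1 : S.ltP a b) (h2 : S.leP b c) : S.ltP a c := by
  rcases h2 with rfl | h2; exact h1; exact ltP_trans h1 h2

lemma leP_trans {a b c : S.F (k+1)} (h1 : S.leP a b) (h2 : S.leP b c) : S.leP a c := by
  rcases h1 with rfl | h1; exact h2; exact Or.inr (ltP_leP h1 h2)

lemma ltP_asymm (hS : IsOFS S) {a b : S.F (k+1)} (h1 : S.ltP a b) (h2 : S.ltP b a) : False :=
  hS.strictP a (ltP_trans h1 h2)

lemma leP_antisymm (hS : IsOFS S) {a b : S.F (k+1)} (h1 : S.leP a b) (h2 : S.leP b a) : a = b := by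
  rcases h1 with rfl | h1; rfl
  rcases h2 with rfl | h2; rfl
  exact absurd (ltP_trans h1 h2) (hS.strictP a)

/-- single step of `<⁺`. -/
lemma ltP_step {a : S.F (k+1)} {α : S.F (k+2)} (hnl : ¬ S.isLoop α)
    (ha : Sum.inl a ∈ S.δ α) : S.ltP a (S.γ α) :=
  Relation.TransGen.single ⟨α, hnl, ha, rfl⟩

lemma ltM_step {a b : S.F (k+2)} (h : Sum.inl (S.γ a) ∈ S.δ b) : S.ltM a b :=
  Relation.TransGen.single h

lemma ltM_trans {a b c : S.F (k+2)} (h1 : S.ltM a b) (h2 : S.ltM b c) : S.ltM a c :=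
  Relation.TransGen.trans h1 h2

/-- if `v` is a loop, membership in `δ v` forces value. -/
lemma loop_mem {v : S.F (k+2)} (h : S.isLoop v) {w : S.F (k+1)}
    (hm : Sum.inl w ∈ S.δ v) : w = S.γ v := by
  rw [h] at hm; simpa using hm

/-- γ is monotone (weakly) along `ltM`; strict when the target is not a loop. -/
lemma ltM_gamma_le {u v : S.F (k+2)} (h : S.ltM u v) : S.leP (S.γ u) (S.γ v) := by
  induction h with
  | @single b h =>
      by_cases hl : S.isLoop b
      · exact Or.inl (loop_mem hl h)
      · exact Or.inr (ltP_step hl h)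
  | @tail b c h1 h2 ih =>
      refine leP_trans ih ?_
      by_cases hl : S.isLoop c
      · exact Or.inl (loop_mem hl h2)
      · exact Or.inr (ltP_step hl h2)

lemma ltM_gamma_lt {u v : S.F (k+2)} (h : S.ltM u v) (hv : ¬ S.isLoop v) :
    S.ltP (S.γ u) (S.γ v) := by
  rcases (Relation.TransGen.tail'_iff).mp h with ⟨b, hub, hbv⟩
  have h2 : S.ltP (S.γ b) (S.γ v) := ltP_step hv hbv
  rcases Relation.reflTransGen_iff_eq_or_transGen.mp hub with rfl | hub
  · exact h2
  · exact leP_ltP (ltM_gamma_le hub) h2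

/-- `ltM` into an ε-face is impossible. -/
lemma ltM_not_eps (hS : IsOFS S) {u v : S.F (k+2)} (h : S.ltM u v) {w : S.F k}
    (he : Sum.inr w ∈ S.δ v) : False := by
  have hd := hS.dom_eps v w he
  rcases (Relation.TransGen.tail'_iff).mp h with ⟨b, _, hbv⟩
  rw [hd] at hbv; simp at hbv

end Basics

section Tools
variable {k : ℕ}

lemma wfPc (hS : IsOFS S) {k : ℕ} : WellFounded (fun a b : S.F (k+1) => S.ltP b a) := by
  haveI := hS.fin (k+1)
  letI : IsTrans (S.F (k+1)) (fun a b : S.F (k+1) => S.ltP b a) :=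
    ⟨fun a b c h1 h2 => ltP_trans h2 h1⟩
  letI : IsIrrefl (S.F (k+1)) (fun a b : S.F (k+1) => S.ltP b a) := ⟨fun a => hS.strictP a⟩
  exact Finite.wellFounded_of_trans_of_irrefl _

lemma wfP (hS : IsOFS S) {k : ℕ} : WellFounded (S.ltP (k := k)) := by
  haveI := hS.fin (k+1)
  letI : IsTrans (S.F (k+1)) (S.ltP (k := k)) := ⟨fun a b c h1 h2 => ltP_trans h1 h2⟩
  letI : IsIrrefl (S.F (k+1)) (S.ltP (k := k)) := ⟨fun a => hS.strictP a⟩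
  exact Finite.wellFounded_of_trans_of_irrefl _

/-- globularity, γ-part, as a dichotomy. -/
lemma dichoγ (hS : IsOFS S) (Γ : S.F (k+3)) {x : S.F (k+2)} (hx : Sum.inl x ∈ S.δ Γ) :
    S.γ x = S.γ (S.γ Γ) ∨ ∃ y, (Sum.inl y ∈ S.δ Γ ∧ ¬ S.isLoop y) ∧ Sum.inl (S.γ x) ∈ S.δ y := by
  by_cases hint : S.γ x ∈ ⋃ y ∈ S.nlDom Γ, S.realDom y
  · right
    rcases Set.mem_iUnion₂.mp hint with ⟨y, hy, hmem⟩
    exact ⟨y, ⟨hy.1, hy.2⟩, hmem⟩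
  · left
    have : S.γ x ∈ ({S.γ (S.γ Γ)} : Set (S.F (k+1))) := by
      rw [hS.glob_γ Γ]
      exact ⟨⟨Sum.inl x, hx, rfl⟩, hint⟩
    simpa using this

/-- globularity, δ-part, as a dichotomy (uniform in the dimension). -/
lemma dichoδ (hS : IsOFS S) (α : S.F (k+3)) {b : S.F (k+2)} (hb : Sum.inl b ∈ S.δ α)
    {w : S.F (k+1)} (hw : Sum.inl w ∈ S.δ b) :
    Sum.inl w ∈ S.δ (S.γ α) ∨ ∃ x, (Sum.inl x ∈ S.δ α ∧ ¬ S.isLoop x) ∧ S.γ x = w := by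
  by_cases hint : ∃ x, (Sum.inl x ∈ S.δ α ∧ ¬ S.isLoop x) ∧ S.γ x = w
  · exact Or.inr hint
  · left
    cases k with
    | zero =>
        have h := hS.glob_δ_low α
        have hw2 : w ∈ S.realDom (S.γ α) := by
          rw [h]
          constructor
          · exact Set.mem_biUnion hb (by exact hw)
          · rintro ⟨x, hx, hgx⟩
            exact hint ⟨x, ⟨hx.1, hx.2⟩, hgx⟩
        exact hw2
    | succ j =>
        have h := (hS.glob_δ α).1
        have hw2 : w ∈ {x : S.F (j+2) | Sum.inl x ∈ S.δ (S.γ α)} := by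
          rw [h]
          constructor
          · exact Set.mem_biUnion hb (by exact hw)
          · rintro ⟨x, hx, hgx⟩
            exact hint ⟨x, ⟨hx.1, hx.2⟩, by injection hgx⟩
        exact hw2

/-- every face in the domain of `Γ` has codomain `≤⁺` the codomain of `γ Γ`. -/
lemma dgl (hS : IsOFS S) (Γ : S.F (k+3)) :
    ∀ e : S.F (k+2), Sum.inl e ∈ S.δ Γ → S.leP (S.γ e) (S.γ (S.γ Γ)) := by
  have wf : WellFounded (fun x y : S.F (k+2) => S.ltP (S.γ y) (S.γ x)) :=
    InvImage.wf (fun e : S.F (k+2) => S.γ e) (wfPc hS)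
  intro e
  induction e using wf.induction with
  | _ e ih =>
    intro he
    rcases dichoγ hS Γ he with h | ⟨y, hy, hmem⟩
    · exact Or.inl h
    · have hlt : S.ltP (S.γ e) (S.γ y) := ltP_step hy.2 hmem
      have := ih y hlt hy.1
      exact leP_trans (Or.inr hlt) this

lemma ltP_gamma_le (hS : IsOFS S) {u v : S.F (k+2)} (h : S.ltP u v) :
    S.leP (S.γ u) (S.γ v) := by
  induction h with
  | @single b hb => rcases hb with ⟨α, hnl, hu, rfl⟩; exact dgl hS α u hu
  | @tail b c h1 h2 ih =>
      rcases h2 with ⟨α, hnl, hb, rfl⟩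
      exact leP_trans ih (dgl hS α b hb)

lemma mem_thetaDot_gamma (a : S.F (k+2)) : S.γ a ∈ S.thetaDot a := Set.mem_insert _ _
lemma mem_thetaDot_dom {a : S.F (k+2)} {w : S.F (k+1)} (h : Sum.inl w ∈ S.δ a) :
    w ∈ S.thetaDot a := Set.mem_insert_iff.mpr (Or.inr h)

/-- upper linearity: two faces above a common face are `≤⁺`-comparable. -/
lemma ul (hS : IsOFS S) : ∀ z p q : S.F (k+1), S.ltP z p → S.ltP z q →
    p = q ∨ S.ltP p q ∨ S.ltP q p := by
  intro z
  induction z using (wfPc hS).induction with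
  | _ z ih =>
    intro p q hzp hzq
    rcases (Relation.TransGen.head'_iff).mp hzp with ⟨p₁, ⟨β, hβnl, hzβ, hγβ⟩, hp₁p⟩
    rcases (Relation.TransGen.head'_iff).mp hzq with ⟨q₁, ⟨ρ, hρnl, hzρ, hγρ⟩, hq₁q⟩
    have hzp₁ : S.ltP z p₁ := Relation.TransGen.single ⟨β, hβnl, hzβ, hγβ⟩
    have hzq₁ : S.ltP z q₁ := Relation.TransGen.single ⟨ρ, hρnl, hzρ, hγρ⟩
    have hp₁p' : S.leP p₁ p := by
      rcases Relation.reflTransGen_iff_eq_or_transGen.mp hp₁p with h | h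
      · exact Or.inl h.symm
      · exact Or.inr h
    have hq₁q' : S.leP q₁ q := by
      rcases Relation.reflTransGen_iff_eq_or_transGen.mp hq₁q with h | h
      · exact Or.inl h.symm
      · exact Or.inr h
    -- p₁ and q₁ are comparable-or-equal
    have tri : p₁ = q₁ ∨ S.ltP p₁ q₁ ∨ S.ltP q₁ p₁ := by
      by_cases hbr : β = ρ
      · left; rw [← hγβ, ← hγρ, hbr]
      · have hcom : (S.thetaDot β ∩ S.thetaDot ρ).Nonempty :=
          ⟨z, mem_thetaDot_dom hzβ, mem_thetaDot_dom hzρ⟩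
        rcases hS.pencil₁ β ρ hbr hcom with (h | h) | (h | h)
        · right; left
          have := ltM_gamma_lt (hS.sim_lt_minus β ρ h) hρnl
          rwa [hγβ, hγρ] at this
        · right; right
          have := ltM_gamma_lt (hS.sim_lt_minus ρ β h) hβnl
          rwa [hγβ, hγρ] at this
        · have := ltP_gamma_le hS h
          rw [hγβ, hγρ] at this
          rcases this with h' | h'
          · exact Or.inl h'
          · exact Or.inr (Or.inl h')
        · have := ltP_gamma_le hS h
          rw [hγβ, hγρ] at this
          rcases this with h' | h'
          · exact Or.inl h'.symm
          · exact Or.inr (Or.inr h')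
    rcases tri with rfl | hlt | hlt
    · -- p₁ = q₁ ≤ p, q
      rcases hp₁p' with rfl | hp
      · rcases hq₁q' with rfl | hq
        · exact Or.inl rfl
        · exact Or.inr (Or.inl hq)
      · rcases hq₁q' with rfl | hq
        · exact Or.inr (Or.inr hp)
        · exact ih p₁ hzp₁ p q hp hq
    · -- p₁ < q₁
      have hp₁q : S.ltP p₁ q := ltP_leP hlt hq₁q'
      rcases hp₁p' with rfl | hp
      · exact Or.inr (Or.inl hp₁q)
      · exact ih p₁ hzp₁ p q hp hp₁q
    · have hq₁p : S.ltP q₁ p := ltP_leP hlt hp₁p'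
      rcases hq₁q' with rfl | hq
      · exact Or.inr (Or.inr hq₁p)
      · exact ih q₁ hzq₁ p q hq₁p hq

/-- the chain of witnesses for `γ a <⁺ v`. -/
lemma echain (hS : IsOFS S) {a : S.F (k+2)} : ∀ {v : S.F (k+1)}, S.ltP (S.γ a) v →
    ∃ e : S.F (k+2), S.ltM a e ∧ S.γ e = v ∧ ¬ S.isLoop e := by
  intro v h
  induction h with
  | @single v hv => rcases hv with ⟨α, hnl, hm, rfl⟩; exact ⟨α, ltM_step hm, rfl, hnl⟩
  | @tail v v' h1 h2 ih =>
      rcases ih with ⟨e, hae, he, _⟩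
      rcases h2 with ⟨α, hnl, hm, rfl⟩
      rw [← he] at hm
      exact ⟨α, Relation.TransGen.tail hae hm, rfl, hnl⟩

end Tools

/-! ## Chains and the master disjunction -/

/-- The master disjunction: some relation between `a` and `c`. -/
def Dd (S : PreOFS) {k : ℕ} (a c : S.F (k+2)) : Prop :=
  a = c ∨ S.ltP a c ∨ S.ltM a c ∨ S.sim a c ∨ S.ltP c a ∨ S.sim c a ∨ S.ltM c a

/-- `ltM`-chains with explicit length, last step exposed. -/
def ChainM (S : PreOFS) {k : ℕ} : ℕ → S.F (k+2) → S.F (k+2) → Prop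
  | 0, a, b => a = b
  | n+1, a, b => ∃ t, ChainM S n a t ∧ Sum.inl (S.γ t) ∈ S.δ b

/-- `ltP`-chains with explicit length, first step exposed. -/
def ChainP (S : PreOFS) {k : ℕ} : ℕ → S.F (k+1) → S.F (k+1) → Prop
  | 0, a, b => a = b
  | n+1, a, b => ∃ α : S.F (k+2), ¬ S.isLoop α ∧ Sum.inl a ∈ S.δ α ∧ ChainP S n (S.γ α) b

section Chains
variable {k : ℕ}

lemma chainM_ltM : ∀ {n : ℕ} {a b : S.F (k+2)}, ChainM S (n+1) a b → S.ltM a b := by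
  intro n
  induction n with
  | zero => rintro a b ⟨t, ht, h⟩; cases ht; exact ltM_step h
  | succ m ih => rintro a b ⟨t, ht, h⟩; exact Relation.TransGen.tail (ih ht) h

lemma ltM_chainM {a b : S.F (k+2)} (h : S.ltM a b) : ∃ n, ChainM S (n+1) a b := by
  induction h with
  | @single v hv => exact ⟨0, a, rfl, hv⟩
  | @tail v v' h1 h2 ih => rcases ih with ⟨n, hn⟩; exact ⟨n+1, v, hn, h2⟩

lemma chainP_ltP : ∀ {n : ℕ} {u c : S.F (k+1)}, ChainP S (n+1) u c → S.ltP u c := by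
  intro n
  induction n with
  | zero =>
      rintro u c ⟨α, h1, h2, h3⟩
      have : S.γ α = c := h3
      exact Relation.TransGen.single ⟨α, h1, h2, this⟩
  | succ m ih =>
      rintro u c ⟨α, h1, h2, h3⟩
      exact Relation.TransGen.head ⟨α, h1, h2, rfl⟩ (ih h3)

lemma chainP_leP : ∀ {n : ℕ} {u c : S.F (k+1)}, ChainP S n u c → S.leP u c := by
  intro n
  cases n with
  | zero => intro u c h; exact Or.inl h
  | succ m => intro u c h; exact Or.inr (chainP_ltP h)

lemma chainP_snoc : ∀ {n : ℕ} {u v c : S.F (k+1)}, ChainP S n u v →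
    (∃ α : S.F (k+2), ¬ S.isLoop α ∧ Sum.inl v ∈ S.δ α ∧ S.γ α = c) → ChainP S (n+1) u c := by
  intro n
  induction n with
  | zero =>
      rintro u v c h ⟨α, h1, h2, h3⟩
      cases h
      exact ⟨α, h1, h2, h3⟩
  | succ m ih =>
      rintro u v c ⟨α, h1, h2, h3⟩ hst
      exact ⟨α, h1, h2, ih h3 hst⟩

lemma ltP_chainP {u c : S.F (k+1)} (h : S.ltP u c) : ∃ n, ChainP S (n+1) u c := by
  induction h with
  | @single v hv => rcases hv with ⟨α, h1, h2, h3⟩; exact ⟨0, α, h1, h2, h3⟩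
  | @tail v v' h1 h2 ih =>
      rcases ih with ⟨n, hn⟩
      exact ⟨n+1, chainP_snoc hn h2⟩

/-- When the codomains agree, the pencil axiom immediately relates the two faces. -/
lemma gammaEqDance (hS : IsOFS S) {a c : S.F (k+2)} (h : S.γ a = S.γ c) : Dd S a c := by
  by_cases hac : a = c
  · exact Or.inl hac
  · have hcom : (S.thetaDot a ∩ S.thetaDot c).Nonempty :=
      ⟨S.γ a, mem_thetaDot_gamma a, by rw [h]; exact mem_thetaDot_gamma c⟩
    rcases hS.pencil₁ a c hac hcom with (h' | h') | (h' | h')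
    · exact Or.inr (Or.inr (Or.inr (Or.inl h')))
    · exact Or.inr (Or.inr (Or.inr (Or.inr (Or.inr (Or.inl h')))))
    · exact Or.inr (Or.inl h')
    · exact Or.inr (Or.inr (Or.inr (Or.inr (Or.inl h'))))

/-- Consume the master disjunction at the top level. -/
lemma consume (hS : IsOFS S) {a b c : S.F (k+2)} (h1 : S.sim a b) (h2 : S.ltP b c)
    (hD : Dd S a c) : S.sim a c ∨ S.ltP a c := by
  have hklt : ¬ S.ltP c a := by
    intro h
    exact hS.disj a b (Or.inl h1) (Or.inr (ltP_trans h2 h))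
  have hkeq : a ≠ c := by
    rintro rfl
    exact hS.disj a b (Or.inl h1) (Or.inr h2)
  have hksim : ¬ S.sim c a := by
    intro h
    exact hS.disj c b (Or.inl (hS.sim_trans c a b h h1)) (Or.inr h2)
  have hdance : ∀ x : S.F (k+1), x ∈ S.thetaDot a → x ∈ S.thetaDot c → S.sim a c ∨ S.ltP a c := by
    intro x hxa hxc
    rcases hS.pencil₁ a c hkeq ⟨x, hxa, hxc⟩ with (h | h) | (h | h)
    · exact Or.inl h
    · exact absurd h hksim
    · exact Or.inr h
    · exact absurd h hklt
  have hfull : ∀ e, e ∈ S.thetaFull a → e ∈ S.thetaFull c →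
      (∃ x : S.F (k+1), x ∈ S.thetaDot a ∧ x ∈ S.thetaDot c) ∨
        (∃ u : S.F k, Sum.inr u ∈ S.δ a ∧ Sum.inr u ∈ S.δ c) := by
    intro e hea hec
    cases e with
    | inl x =>
        left
        refine ⟨x, ?_, ?_⟩
        · rcases Set.mem_insert_iff.mp hea with h | h
          · rw [show x = S.γ a from by injection h]; exact mem_thetaDot_gamma a
          · exact mem_thetaDot_dom h
        · rcases Set.mem_insert_iff.mp hec with h | h
          · rw [show x = S.γ c from by injection h]; exact mem_thetaDot_gamma c
          · exact mem_thetaDot_dom h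
    | inr u =>
        right
        refine ⟨u, ?_, ?_⟩
        · rcases Set.mem_insert_iff.mp hea with h | h
          · exact absurd h (by simp)
          · exact h
        · rcases Set.mem_insert_iff.mp hec with h | h
          · exact absurd h (by simp)
          · exact h
  rcases hD with rfl | h | h | h | h | h | h
  · exact absurd rfl hkeq
  · exact Or.inr h
  · -- ltM a c
    by_cases hθ : S.thetaFull a ∩ S.thetaFull c = ∅
    · exact Or.inl ((hS.disj_theta a c hθ).mpr h)
    · rcases Set.nonempty_iff_ne_empty.mpr hθ with ⟨e, hea, hec⟩
      rcases hfull e hea hec with ⟨x, hxa, hxc⟩ | ⟨u, _, huc⟩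
      · exact hdance x hxa hxc
      · exact absurd (ltM_not_eps hS h huc) (by simp)
  · exact Or.inl h
  · exact absurd h hklt
  · exact absurd h hksim
  · -- ltM c a
    by_cases hθ : S.thetaFull a ∩ S.thetaFull c = ∅
    · exact absurd ((hS.disj_theta c a (by rwa [Set.inter_comm])).mpr h) hksim
    · rcases Set.nonempty_iff_ne_empty.mpr hθ with ⟨e, hea, hec⟩
      rcases hfull e hea hec with ⟨x, hxa, hxc⟩ | ⟨u, hua, _⟩
      · exact hdance x hxa hxc
      · exact absurd (ltM_not_eps hS h hua) (by simp)

end Chains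

section Monster
variable {k : ℕ}

/-- entry of a wire of `δ(γ φ)` into the domain of `φ` (reverse globularity extraction). -/
lemma domEntry (hS : IsOFS S) (φ : S.F (k+3)) (hne : ¬ S.isEps φ) {w : S.F (k+1)}
    (hw : Sum.inl w ∈ S.δ (S.γ φ)) :
    ∃ z, Sum.inl z ∈ S.δ φ ∧ Sum.inl w ∈ S.δ z := by
  have key : Sum.inl w ∈ ⋃ e ∈ S.δ φ, S.domM e ∨
      (∃ e ∈ S.δ φ, Sum.inl w ∈ S.domM e) := by
    cases k with
    | zero =>
        have h := hS.glob_δ_low φ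
        have : w ∈ S.realDom (S.γ φ) := hw
        rw [h] at this
        right
        rcases Set.mem_iUnion₂.mp this.1 with ⟨e, he, hm⟩
        exact ⟨e, he, hm⟩
    | succ j =>
        have h := (hS.glob_δ φ).1
        have : w ∈ {x : S.F (j+2) | Sum.inl x ∈ S.δ (S.γ φ)} := hw
        rw [h] at this
        exact Or.inl this.1
  have key2 : ∃ e ∈ S.δ φ, Sum.inl w ∈ S.domM e := by
    rcases key with h | h
    · rcases Set.mem_iUnion₂.mp h with ⟨e, he, hm⟩; exact ⟨e, he, hm⟩
    · exact h
  rcases key2 with ⟨e, he, hm⟩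
  cases e with
  | inl z => exact ⟨z, he, hm⟩
  | inr u =>
      exfalso
      exact hne ⟨u, he⟩

/-- statement packages -/
def LoopyStmt (S : PreOFS) (L : ℕ) : Prop := ∀ {k : ℕ} (a y c : S.F (k+2)),
  S.isLoop a → ¬ S.isLoop y → Sum.inl (S.γ a) ∈ S.δ y → ChainP S (L+1) y c → Dd S a c
def ML1Stmt (S : PreOFS) (L : ℕ) : Prop := ∀ {k : ℕ} (a u c : S.F (k+2)),
  Sum.inl (S.γ a) ∈ S.δ u → ChainP S (L+1) u c → Dd S a c
def ClimbStmt (S : PreOFS) (L : ℕ) : Prop := ∀ {k : ℕ} (a C c : S.F (k+2)),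
  S.γ C = S.γ a → ChainP S (L+1) C c → Dd S a c

theorem pack (hS : IsOFS S) : ∀ L, LoopyStmt S L ∧ ML1Stmt S L ∧ ClimbStmt S L := by
  intro L
  induction L using Nat.strong_induction_on with
  | _ L IH =>
  have loopy : LoopyStmt S L := by
    intro k a
    induction a using (wfP hS).induction with
    | _ a iha =>
    intro y c hal hynl hay hchain
    obtain ⟨β, hβnl, hyβ, hrest⟩ := hchain
    rcases dichoδ hS β hyβ hay with hwh | ⟨x', ⟨hx'β, hx'nl⟩, hγx'⟩
    · -- the wire continues into δ(γ β)
      cases L with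
      | zero =>
          have : S.γ β = c := hrest
          rw [this] at hwh
          exact Or.inr (Or.inr (Or.inl (ltM_step hwh)))
      | succ L' => exact (IH L' (by omega)).2.1 a (S.γ β) c hwh hrest
    · obtain ⟨φ, hφnl, hγφ⟩ := hS.loop_fill a hal
      by_cases heps : S.isEps φ
      · -- ε filler: use pencil₂
        have hiot : S.γ (S.γ φ) ∈ S.iota β := by
          rw [hγφ]
          exact ⟨x', ⟨hx'β, hx'nl⟩, y, ⟨hyβ, hynl⟩, hγx', hay⟩
        rcases hS.pencil₂ φ β heps hiot with h | h
        · have := ltM_gamma_lt (hS.sim_lt_minus φ β h) hβnl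
          rw [hγφ] at this
          exact Or.inr (Or.inl (ltP_leP this (chainP_leP hrest)))
        · have := ltP_gamma_le hS h
          rw [hγφ] at this
          rcases leP_trans this (chainP_leP hrest) with h' | h'
          · exact Or.inl h'
          · exact Or.inr (Or.inl h')
      · -- non-ε filler: its entry cell is a loop strictly below a
        have hwa : Sum.inl (S.γ a) ∈ S.δ (S.γ φ) := by
          rw [hγφ, hal]; exact rfl
        obtain ⟨z, hzφ, hwz⟩ := domEntry hS φ heps hwa
        have hz : S.leP (S.γ z) (S.γ a) := by
          have := dgl hS φ z hzφ
          rwa [hγφ] at this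
        by_cases hzl : S.isLoop z
        · -- z is a loop at the same wire
          have hγz : S.γ a = S.γ z := loop_mem hzl hwz
          have hza : S.ltP z a := Relation.TransGen.single ⟨φ, hφnl, hzφ, hγφ⟩
          have hDz : Dd S z c := by
            refine iha z hza y c hzl hynl ?_ ⟨β, hβnl, hyβ, hrest⟩
            rw [← hγz]; exact hay
          rcases hDz with rfl | h | h | h | h | h | h
          · exact Or.inr (Or.inr (Or.inr (Or.inr (Or.inl hza))))
          · rcases ul hS z a c hza h with h' | h' | h'
            · exact Or.inl h'
            · exact Or.inr (Or.inl h')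
            · exact Or.inr (Or.inr (Or.inr (Or.inr (Or.inl h'))))
          · -- ltM z c: swap the head
            rcases (Relation.TransGen.head'_iff).mp h with ⟨v, hv, hrt⟩
            rw [← hγz] at hv
            exact Or.inr (Or.inr (Or.inl (Relation.TransGen.head' hv hrt)))
          · rcases (Relation.TransGen.head'_iff).mp (hS.sim_lt_minus z c h) with ⟨v, hv, hrt⟩
            rw [← hγz] at hv
            exact Or.inr (Or.inr (Or.inl (Relation.TransGen.head' hv hrt)))
          · exact Or.inr (Or.inr (Or.inr (Or.inr (Or.inl (ltP_trans h hza)))))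
          · -- sim c z: swap the tail
            rcases (Relation.TransGen.tail'_iff).mp (hS.sim_lt_minus c z h) with ⟨v, hrt, hv⟩
            have : S.γ v = S.γ z := loop_mem hzl hv
            have hva : Sum.inl (S.γ v) ∈ S.δ a := by
              rw [hal, this, ← hγz]; exact rfl
            exact Or.inr (Or.inr (Or.inr (Or.inr (Or.inr (Or.inr
              (Relation.TransGen.tail' hrt hva))))))
          · rcases (Relation.TransGen.tail'_iff).mp h with ⟨v, hrt, hv⟩
            have : S.γ v = S.γ z := loop_mem hzl hv
            have hva : Sum.inl (S.γ v) ∈ S.δ a := by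
              rw [hal, this, ← hγz]; exact rfl
            exact Or.inr (Or.inr (Or.inr (Or.inr (Or.inr (Or.inr
              (Relation.TransGen.tail' hrt hva))))))
        · -- z not a loop : contradiction
          exfalso
          have h1 : S.ltP (S.γ a) (S.γ z) := ltP_step hzl hwz
          rcases hz with h' | h'
          · rw [h'] at h1; exact hS.strictP _ h1
          · exact ltP_asymm hS h1 h'
  have ml1 : ML1Stmt S L := by
    intro k a u c hau hchain
    obtain ⟨α, hαnl, huα, hrest⟩ := hchain
    by_cases hauEq : a = u
    · subst hauEq
      exact Or.inr (Or.inl (ltP_leP (ltP_step hαnl huα) (chainP_leP hrest)))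
    rcases dichoδ hS α huα hau with hwg | ⟨x, ⟨hxα, hxnl⟩, hγx⟩
    · cases L with
      | zero =>
          have : S.γ α = c := hrest
          rw [this] at hwg
          exact Or.inr (Or.inr (Or.inl (ltM_step hwg)))
      | succ L' => exact (IH L' (by omega)).2.1 a (S.γ α) c hwg hrest
    · by_cases haxEq : a = x
      · subst haxEq
        exact Or.inr (Or.inl (ltP_leP (ltP_step hαnl hxα) (chainP_leP hrest)))
      have hcom : (S.thetaDot a ∩ S.thetaDot x).Nonempty :=
        ⟨S.γ a, mem_thetaDot_gamma a, by rw [← hγx]; exact mem_thetaDot_gamma x⟩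
      have hxc : ChainP S (L+1) x c := ⟨α, hαnl, hxα, hrest⟩
      rcases hS.pencil₁ a x haxEq hcom with (h | h) | (h | h)
      · exfalso
        have := ltM_gamma_lt (hS.sim_lt_minus a x h) hxnl
        rw [hγx] at this
        exact hS.strictP _ this
      · -- sim x a
        by_cases hal : S.isLoop a
        · -- loop machinery
          by_cases hul : S.isLoop u
          · have hγu : S.γ a = S.γ u := loop_mem hul hau
            rcases dichoγ hS α huα with heq | ⟨y, ⟨hyα, hynl⟩, hmem⟩
            · -- γ(γ α) = γ u = γ a : climb
              have hγg : S.γ (S.γ α) = S.γ a := by rw [← heq, ← hγu]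
              cases L with
              | zero =>
                  have : S.γ α = c := hrest
                  rw [this] at hγg
                  exact gammaEqDance hS hγg.symm
              | succ L' => exact (IH L' (by omega)).2.2 a (S.γ α) c hγg hrest
            · rw [← hγu] at hmem
              exact loopy a y c hal hynl hmem ⟨α, hαnl, hyα, hrest⟩
          · exact loopy a u c hal hul hau ⟨α, hαnl, huα, hrest⟩
        · exfalso
          have := ltM_gamma_lt (hS.sim_lt_minus x a h) hal
          rw [hγx] at this
          exact hS.strictP _ this
      · exact Or.inr (Or.inl (ltP_trans h (chainP_ltP hxc)))
      · rcases ul hS x a c h (chainP_ltP hxc) with h' | h' | h'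
        · exact Or.inl h'
        · exact Or.inr (Or.inl h')
        · exact Or.inr (Or.inr (Or.inr (Or.inr (Or.inl h'))))
  have climb : ClimbStmt S L := by
    intro k a C c hγC hchain
    by_cases haC : a = C
    · subst haC
      exact Or.inr (Or.inl (chainP_ltP hchain))
    have hcom : (S.thetaDot a ∩ S.thetaDot C).Nonempty :=
      ⟨S.γ a, mem_thetaDot_gamma a, by rw [← hγC]; exact mem_thetaDot_gamma C⟩
    obtain ⟨α₂, hnl₂, hCα₂, hrest₂⟩ := hchain
    have hclimb : Dd S a c := by
      rcases dichoγ hS α₂ hCα₂ with heq | ⟨y₂, ⟨hy₂, hy₂nl⟩, hmem⟩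
      · have hγg : S.γ (S.γ α₂) = S.γ a := by rw [← heq, hγC]
        cases L with
        | zero =>
            have : S.γ α₂ = c := hrest₂
            rw [this] at hγg
            exact gammaEqDance hS hγg.symm
        | succ L' => exact (IH L' (by omega)).2.2 a (S.γ α₂) c hγg hrest₂
      · rw [hγC] at hmem
        exact ml1 a y₂ c hmem ⟨α₂, hnl₂, hy₂, hrest₂⟩
    rcases hS.pencil₁ a C haC hcom with (h | h) | (h | h)
    · exact hclimb
    · exact hclimb
    · exact Or.inr (Or.inl (ltP_trans h (chainP_ltP ⟨α₂, hnl₂, hCα₂, hrest₂⟩)))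
    · rcases ul hS C a c h (chainP_ltP ⟨α₂, hnl₂, hCα₂, hrest₂⟩) with h' | h' | h'
      · exact Or.inl h'
      · exact Or.inr (Or.inl h')
      · exact Or.inr (Or.inr (Or.inr (Or.inr (Or.inl h'))))
  exact ⟨loopy, ml1, climb⟩

end Monster

section Phase2
variable {k : ℕ}

/-- tail decomposition of a `ChainP`. -/
lemma chainP_unsnoc : ∀ {n : ℕ} {u c : S.F (k+1)}, ChainP S (n+1) u c →
    ∃ v, ChainP S n u v ∧ ∃ α : S.F (k+2), ¬ S.isLoop α ∧ Sum.inl v ∈ S.δ α ∧ S.γ α = c := by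
  intro n
  induction n with
  | zero =>
      rintro u c ⟨α, h1, h2, h3⟩
      exact ⟨u, rfl, α, h1, h2, h3⟩
  | succ m ih =>
      rintro u c ⟨α, h1, h2, h3⟩
      rcases ih h3 with ⟨v, hv, st⟩
      exact ⟨v, ⟨α, h1, h2, hv⟩, st⟩

/-- normalized tail of an `ltM` chain: the предpredecessor can be chosen not a loop
(or equal to the source). -/
lemma ltM_tail_norm (hS : IsOFS S) {a p : S.F (k+2)} (h : S.ltM a p) :
    ∃ q, (q = a ∨ (S.ltM a q ∧ ¬ S.isLoop q)) ∧ Sum.inl (S.γ q) ∈ S.δ p := by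
  obtain ⟨n, hn⟩ := ltM_chainM h
  clear h
  induction n using Nat.strong_induction_on generalizing p with
  | _ n ih =>
  obtain ⟨q, haq, hqp⟩ := hn
  by_cases hql : S.isLoop q
  · rcases n with _ | n'
    · -- q = a
      cases haq
      exact ⟨a, Or.inl rfl, hqp⟩
    · -- bypass the loop q
      obtain ⟨q₂, haq₂, hq₂q⟩ := haq
      have hγ : S.γ q₂ = S.γ q := loop_mem hql hq₂q
      exact ih n' (by omega) ⟨q₂, haq₂, by rw [hγ]; exact hqp⟩
  · rcases n with _ | n'
    · cases haq
      exact ⟨a, Or.inl rfl, hqp⟩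
    · exact ⟨q, Or.inr ⟨chainM_ltM haq, hql⟩, hqp⟩

/-- walking through the domain of `Γ` along codomains, up to the final wire. -/
lemma walk (hS : IsOFS S) (Γ : S.F (k+3)) :
    ∀ s, Sum.inl s ∈ S.δ Γ → ∃ σ, Sum.inl σ ∈ S.δ Γ ∧ S.γ σ = S.γ (S.γ Γ) ∧
      (σ = s ∨ (S.ltM s σ ∧ ¬ S.isLoop σ)) := by
  have wf : WellFounded (fun x y : S.F (k+2) => S.ltP (S.γ y) (S.γ x)) :=
    InvImage.wf (fun e : S.F (k+2) => S.γ e) (wfPc hS)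
  intro s
  induction s using wf.induction with
  | _ s ihs =>
  intro hsΓ
  rcases dichoγ hS Γ hsΓ with h | ⟨y, ⟨hyΓ, hynl⟩, hmem⟩
  · exact ⟨s, hsΓ, h, Or.inl rfl⟩
  · have hlt : S.ltP (S.γ s) (S.γ y) := ltP_step hynl hmem
    rcases ihs y hlt hyΓ with ⟨σ, h1, h2, h3⟩
    rcases h3 with rfl | ⟨h3, h4⟩
    · exact ⟨σ, h1, h2, Or.inr ⟨ltM_step hmem, hynl⟩⟩
    · exact ⟨σ, h1, h2, Or.inr ⟨ltM_trans (ltM_step hmem) h3, h4⟩⟩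

/-- the one remaining hard configuration -/
lemma w2core (hS : IsOFS S) : ∀ n : ℕ, ∀ {k : ℕ} {a p c : S.F (k+2)},
    S.ltM a p → ChainP S (n+1) c p → ¬ S.isLoop p → S.γ c = S.γ p → Dd S a c := by
  intro n
  induction n using Nat.strong_induction_on with
  | _ n ihn =>
  intro k a p c hap hcp hpnl hγ
  obtain ⟨M, hcM, Γ, hΓnl, hMΓ, hγΓ⟩ := chainP_unsnoc hcp
  -- squeeze: γ M = γ p
  have hγM : S.γ M = S.γ p := by
    have h1 : S.leP (S.γ M) (S.γ p) := by
      have := dgl hS Γ M hMΓ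
      rwa [hγΓ] at this
    have h2 : S.leP (S.γ p) (S.γ M) := by
      rcases chainP_leP hcM with rfl | h
      · exact Or.inl hγ.symm
      · rw [← hγ]; exact ltP_gamma_le hS h
    exact leP_antisymm hS h1 h2
  -- Γ is not an ε-cell
  have hΓeps : ¬ S.isEps Γ := by
    rintro ⟨uu, huu⟩
    rw [hS.dom_eps Γ uu huu] at hMΓ
    simp at hMΓ
  -- normalized tail of the chain a <⁻ p
  obtain ⟨q, hq, hqp⟩ := ltM_tail_norm hS hap
  -- the key strictness trick: γ q ≠ γ p
  have hqv : S.γ q ≠ S.γ p := by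
    intro h
    have := ltP_step hpnl hqp
    rw [h] at this
    exact hS.strictP _ this
  -- entry into the domain of Γ
  obtain ⟨s, hsΓ, hqs⟩ := domEntry hS Γ hΓeps (by rw [hγΓ]; exact hqp)
  -- walk up to the final wire
  obtain ⟨σ, hσΓ, hγσ, hσcase⟩ := walk hS Γ s hsΓ
  rw [hγΓ] at hγσ
  -- σ is not a loop
  have hσnl : ¬ S.isLoop σ := by
    rcases hσcase with rfl | ⟨_, h⟩
    · intro hl
      exact hqv (by rw [loop_mem hl hqs, hγσ])
    · exact h
  -- a <⁻ σ
  have haσ : S.ltM a σ := by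
    have has : S.ltM a s := by
      rcases hq with rfl | ⟨haq, _⟩
      · exact ltM_step hqs
      · exact Relation.TransGen.tail haq hqs
    rcases hσcase with rfl | ⟨h, _⟩
    · exact has
    · exact ltM_trans has h
  by_cases hσM : σ = M
  · -- reached M itself
    rcases n with _ | n'
    · have hc : c = M := hcM
      rw [hσM, ← hc] at haσ
      exact Or.inr (Or.inr (Or.inl haσ))
    · exact ihn n' (by omega) (hσM ▸ haσ) hcM (hσM ▸ hσnl) (by rw [hγ, ← hγM])
  · by_cases hσc : σ = c
    · subst hσc
      exact Or.inr (Or.inr (Or.inl haσ))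
    have hcom : (S.thetaDot σ ∩ S.thetaDot c).Nonempty :=
      ⟨S.γ σ, mem_thetaDot_gamma σ, by rw [hγσ, ← hγ]; exact mem_thetaDot_gamma c⟩
    have hcM' : S.leP c M := chainP_leP hcM
    rcases hS.pencil₁ σ c hσc hcom with (h | h) | (h | h)
    · -- sim σ c
      exact Or.inr (Or.inr (Or.inl (ltM_trans haσ (hS.sim_lt_minus σ c h))))
    · -- sim c σ : contradiction
      exfalso
      have := ltM_gamma_lt (hS.sim_lt_minus c σ h) hσnl
      rw [hγσ, ← hγ] at this
      exact hS.strictP _ this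
    · -- σ <⁺ c : violates local discreteness
      exfalso
      exact hS.local_disc Γ σ M hσΓ hMΓ (ltP_leP h hcM')
    · -- c <⁺ σ
      exfalso
      rcases hcM' with rfl | hcMlt
      · exact hS.local_disc Γ c σ hMΓ hσΓ h
      · rcases ul hS c σ M h hcMlt with h' | h' | h'
        · exact hσM h'
        · exact hS.local_disc Γ σ M hσΓ hMΓ h'
        · exact hS.local_disc Γ M σ hMΓ hσΓ h'

lemma w2 (hS : IsOFS S) {k : ℕ} {a p c : S.F (k+2)} (hap : S.ltM a p) (hcp : S.ltP c p)
    (hpnl : ¬ S.isLoop p) (hγ : S.γ c = S.γ p) : Dd S a c := by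
  obtain ⟨n, hn⟩ := ltP_chainP hcp
  exact w2core hS n hap hn hpnl hγ

theorem mlAll (hS : IsOFS S) : ∀ K L : ℕ, ∀ {k : ℕ} (a u c : S.F (k+2)),
    ChainM S (K+1) a u → ChainP S (L+1) u c → Dd S a c := by
  intro K
  induction K using Nat.strong_induction_on with
  | _ K IHK =>
  intro L
  induction L using Nat.strong_induction_on with
  | _ L IHL =>
  intro k a u c hM hP
  rcases K with _ | K'
  · -- single step: the package
    obtain ⟨t, ht, hstep⟩ := hM
    cases ht
    exact (pack hS L).2.1 a u c hstep hP
  -- longer chain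
  obtain ⟨p, hap, hpu⟩ := hM
  by_cases hpuEq : p = u
  · subst hpuEq
    exact IHK K' (by omega) L a p c hap hP
  by_cases hpl : S.isLoop p
  · -- bypass the loop p
    obtain ⟨p₂, hap₂, hp₂p⟩ := hap
    have : S.γ p₂ = S.γ p := loop_mem hpl hp₂p
    exact IHK K' (by omega) L a u c ⟨p₂, hap₂, by rw [this]; exact hpu⟩ hP
  obtain ⟨α, hαnl, huα, hrest⟩ := hP
  rcases dichoδ hS α huα hpu with hwg | ⟨x, ⟨hxα, hxnl⟩, hγx⟩
  · -- the wire of p continues into γ α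
    cases L with
    | zero =>
        have : S.γ α = c := hrest
        rw [this] at hwg
        exact Or.inr (Or.inr (Or.inl (chainM_ltM ⟨p, hap, hwg⟩)))
    | succ L' => exact IHL L' (by omega) a (S.γ α) c ⟨p, hap, hwg⟩ hrest
  · have hxc : ChainP S (L+1) x c := ⟨α, hαnl, hxα, hrest⟩
    by_cases hpx : p = x
    · subst hpx
      exact IHK K' (by omega) L a p c hap hxc
    have hcom : (S.thetaDot p ∩ S.thetaDot x).Nonempty :=
      ⟨S.γ p, mem_thetaDot_gamma p, by rw [← hγx]; exact mem_thetaDot_gamma x⟩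
    rcases hS.pencil₁ p x hpx hcom with (h | h) | (h | h)
    · exfalso
      have := ltM_gamma_lt (hS.sim_lt_minus p x h) hxnl
      rw [hγx] at this
      exact hS.strictP _ this
    · exfalso
      have := ltM_gamma_lt (hS.sim_lt_minus x p h) hpl
      rw [hγx] at this
      exact hS.strictP _ this
    · -- p <⁺ x, hence p <⁺ c
      obtain ⟨L₂, hL₂⟩ := ltP_chainP (ltP_trans h (chainP_ltP hxc))
      exact IHK K' (by omega) L₂ a p c hap hL₂
    · -- x <⁺ p: compare p with u
      have hcom2 : (S.thetaDot p ∩ S.thetaDot u).Nonempty :=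
        ⟨S.γ p, mem_thetaDot_gamma p, mem_thetaDot_dom hpu⟩
      have huc : S.ltP u c := chainP_ltP ⟨α, hαnl, huα, hrest⟩
      rcases hS.pencil₁ p u hpuEq hcom2 with (h2 | h2) | (h2 | h2)
      · -- sim p u
        rcases ul hS x p c h (chainP_ltP hxc) with h' | h' | h'
        · exact Or.inr (Or.inr (Or.inl (h' ▸ chainM_ltM hap)))
        · obtain ⟨L₂, hL₂⟩ := ltP_chainP h'
          exact IHK K' (by omega) L₂ a p c hap hL₂
        · exact absurd (Or.inr (ltP_trans huc h')) (hS.disj p u (Or.inl h2))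
      · -- sim u p
        exfalso
        have hlt := ltM_gamma_lt (hS.sim_lt_minus u p h2) hpl
        by_cases hul : S.isLoop u
        · rw [loop_mem hul hpu] at hlt
          exact hS.strictP _ hlt
        · exact ltP_asymm hS hlt (ltP_step hul hpu)
      · -- p <⁺ u, hence p <⁺ c
        obtain ⟨L₂, hL₂⟩ := ltP_chainP (ltP_trans h2 huc)
        exact IHK K' (by omega) L₂ a p c hap hL₂
      · -- u <⁺ p
        by_cases hul : S.isLoop u
        · -- the hard route
          have hγup : S.γ p = S.γ u := loop_mem hul hpu
          rcases ul hS u p c h2 huc with h' | h' | h'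
          · exact Or.inr (Or.inr (Or.inl (h' ▸ chainM_ltM hap)))
          · obtain ⟨L₂, hL₂⟩ := ltP_chainP h'
            exact IHK K' (by omega) L₂ a p c hap hL₂
          · -- c <⁺ p : the W2 configuration
            have hγcp : S.γ c = S.γ p := by
              have h1 : S.leP (S.γ c) (S.γ p) := ltP_gamma_le hS h'
              have h2' : S.leP (S.γ u) (S.γ c) := ltP_gamma_le hS huc
              rw [← hγup] at h2'
              exact leP_antisymm hS h1 h2'
            exact w2 hS (chainM_ltM hap) h' hpl hγcp
        · -- u not a loop: contradiction
          exfalso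
          have h1 : S.leP (S.γ u) (S.γ p) := ltP_gamma_le hS h2
          have h2' : S.ltP (S.γ p) (S.γ u) := ltP_step hul hpu
          rcases h1 with h1 | h1
          · rw [h1] at h2'; exact hS.strictP _ h2'
          · exact ltP_asymm hS h2' h1

end Phase2

end OFSProof

/-- if `a <∼ b` and `b <⁺ c` then `a <∼ c` or `a <⁺ c`. -/
theorem stmt9 (S : PreOFS) (hS : IsOFS S) {k : ℕ} (a b c : S.F (k + 1))
    (h1 : S.sim a b) (h2 : S.ltP b c) : S.sim a c ∨ S.ltP a c := by
  cases k with
  | zero => exact absurd h1 (hS.sim_dim0 a b)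
  | succ m =>
      obtain ⟨K, hK⟩ := OFSProof.ltM_chainM (hS.sim_lt_minus a b h1)
      obtain ⟨L, hL⟩ := OFSProof.ltP_chainP h2
      exact OFSProof.consume hS h1 h2 (OFSProof.mlAll hS K L a b c hK hL)
end

section
/- Let S be an ordered face structure and a, b faces of the same dimension with a <^∼ b. Then γ(a) ≤^+ γ(b). -/
theorem stmt10_aux (S : PreOFS) (hS : IsOFS S) {k : ℕ} {a b : S.F (k + 2)}
    (hm : S.ltM a b) : S.leP (S.γ a) (S.γ b) := by
  have step : ∀ {c d : S.F (k + 2)}, Sum.inl (S.γ c) ∈ S.δ d → S.leP (S.γ c) (S.γ d) := by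
    intro c d hcd
    by_cases hl : S.isLoop d
    · left
      rw [PreOFS.isLoop] at hl
      rw [hl] at hcd
      simpa using hcd
    · right
      exact Relation.TransGen.single ⟨d, hl, hcd, rfl⟩
  induction hm with
  | single hab => exact step hab
  | tail _ hcd ih =>
      rcases ih, step hcd with ⟨h1 | h1, h2 | h2⟩
      · left; rw [h1, h2]
      · right; rw [h1]; exact h2
      · right; rw [← h2]; exact h1
      · right; exact h1.trans h2

/-- if `a <∼ b` then `γ(a) ≤⁺ γ(b)`. -/
theorem stmt10 (S : PreOFS) (hS : IsOFS S) {k : ℕ} (a b : S.F (k + 2))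
    (h : S.sim a b) : S.leP (S.γ a) (S.γ b) :=
  stmt10_aux S hS (hS.sim_lt_minus a b h)
end

section
/- Let S be an ordered face structure and a, b faces of the same dimension with γ(a) ⊥^∼ γ(b). Then a and b are incomparable under <^∼ and incomparable under <^+. -/
namespace PreOFS

variable {S : PreOFS}

lemma leP_trans (hS : IsOFS S) {k : ℕ} {x y z : S.F (k + 1)} :
    S.leP x y → S.leP y z → S.leP x z := by
  rintro (rfl | h) (rfl | h')
  · exact Or.inl rfl
  · exact Or.inr h'
  · exact Or.inr h
  · exact Or.inr (h.trans h')

lemma wf_flip_ltP (hS : IsOFS S) {k : ℕ} :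
    WellFounded (fun x y : S.F (k + 1) => S.ltP y x) := by
  haveI : Finite (S.F (k + 1)) := hS.fin _
  haveI : IsTrans (S.F (k + 1)) (fun x y => S.ltP y x) :=
    ⟨fun _ _ _ hab hbc => hbc.trans hab⟩
  haveI : IsIrrefl (S.F (k + 1)) (fun x y => S.ltP y x) :=
    ⟨fun x => hS.strictP x⟩
  exact Finite.wellFounded_of_trans_of_irrefl _

/-- Single-step version of (i): globularity. -/
lemma gamma_step (hS : IsOFS S) {k : ℕ} {a b : S.F (k + 2)}
    (h : ∃ α : S.F (k + 3), ¬ S.isLoop α ∧ Sum.inl a ∈ S.δ α ∧ S.γ α = b) :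
    S.leP (S.γ a) (S.γ b) := by
  obtain ⟨α, _, hmem, rfl⟩ := h
  have key : ∀ y : S.F (k + 1), (∃ e ∈ S.δ α, S.cod e = y) →
      S.leP y (S.γ (S.γ α)) := by
    intro y
    induction y using (wf_flip_ltP hS).induction with
    | _ y ih =>
      intro hy
      by_cases hmem2 : y ∈ ⋃ x ∈ S.nlDom α, S.realDom x
      · simp only [Set.mem_iUnion, exists_prop] at hmem2
        obtain ⟨x, hx, hyx⟩ := hmem2
        have h1 : S.ltP y (S.γ x) := Relation.TransGen.single ⟨x, hx.2, hyx, rfl⟩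
        have h2 := ih (S.γ x) h1 ⟨Sum.inl x, hx.1, rfl⟩
        exact leP_trans hS (Or.inr h1) h2
      · have heq := hS.glob_γ α
        have hy' : y ∈ ({S.γ (S.γ α)} : Set (S.F (k + 1))) := by
          rw [heq]; exact ⟨hy, hmem2⟩
        exact Or.inl hy'
  exact key (S.γ a) ⟨Sum.inl a, hmem, rfl⟩

/-- (i): if `a <⁺ b` then `γ(a) ≤⁺ γ(b)`. -/
lemma gamma_leP (hS : IsOFS S) {k : ℕ} {a b : S.F (k + 2)} (h : S.ltP a b) :
    S.leP (S.γ a) (S.γ b) := by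
  induction h with
  | single h => exact gamma_step hS h
  | tail _ h ih => exact leP_trans hS ih (gamma_step hS h)

lemma gamma_ltM_step (hS : IsOFS S) {k : ℕ} {a b : S.F (k + 2)}
    (h : Sum.inl (S.γ a) ∈ S.δ b) : S.leP (S.γ a) (S.γ b) := by
  by_cases hl : S.isLoop b
  · rw [hl, Set.mem_singleton_iff] at h
    exact Or.inl (Sum.inl.inj h)
  · exact Or.inr (Relation.TransGen.single ⟨b, hl, h, rfl⟩)

/-- (ii): if `a <∼ b` then `γ(a) ≤⁺ γ(b)`. -/
lemma gamma_sim (hS : IsOFS S) {k : ℕ} {a b : S.F (k + 2)} (h : S.sim a b) :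
    S.leP (S.γ a) (S.γ b) := by
  have h' := hS.sim_lt_minus a b h
  clear h
  induction h' with
  | single h => exact gamma_ltM_step hS h
  | tail _ h ih => exact leP_trans hS ih (gamma_ltM_step hS h)

lemma no_leP (hS : IsOFS S) {k : ℕ} {x y : S.F (k + 1)} (h : S.perpS x y) :
    ¬ S.leP x y := by
  rintro (rfl | hlt)
  · rcases h with h | h <;> exact hS.sim_irrefl _ h
  · exact hS.disj x y h (Or.inl hlt)

end PreOFS

/-- if `γ(a) ⊥∼ γ(b)` then `a` and `b` are incomparable under
`<∼` and incomparable under `<⁺`. -/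
theorem stmt12 (S : PreOFS) (hS : IsOFS S) {k : ℕ} (a b : S.F (k + 2))
    (h : S.perpS (S.γ a) (S.γ b)) : ¬ S.perpS a b ∧ ¬ S.perpP a b := by
  constructor
  · rintro (hab | hba)
    · exact PreOFS.no_leP hS h (PreOFS.gamma_sim hS hab)
    · exact PreOFS.no_leP hS h.symm (PreOFS.gamma_sim hS hba)
  · rintro (hab | hba)
    · exact PreOFS.no_leP hS h (PreOFS.gamma_leP hS hab)
    · exact PreOFS.no_leP hS h.symm (PreOFS.gamma_leP hS hba)
end

section
/- Every monotone endomorphism of an ordered face structure is the identity. -/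
/-- A monotone morphism of ordered face structures: it commutes with `γ`,
restricts to a bijection between the (genuine) domains, preserves empty
domains, and preserves the order `<∼`. -/
structure IsOFSHom (S T : PreOFS) (f : ∀ k, S.F k → T.F k) : Prop where
  map_γ : ∀ {k : ℕ} (a : S.F (k + 2)), f (k + 1) (S.γ a) = T.γ (f (k + 2) a)
  map_eps : ∀ {k : ℕ} (a : S.F (k + 2)) (u : S.F k),
    Sum.inr u ∈ S.δ a → T.δ (f (k + 2) a) = {Sum.inr (f k u)}
  map_dom : ∀ {k : ℕ} (a : S.F (k + 2)),
    Set.BijOn (f (k + 1)) (S.realDom a) (T.realDom (f (k + 2) a))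
  map_sim : ∀ {k : ℕ} (x y : S.F (k + 1)), S.sim x y → T.sim (f (k + 1) x) (f (k + 1) y)

namespace Stmt15Aux

open Relation Set

variable {S : PreOFS} {f : ∀ k, S.F k → S.F k}

/-- The generating relation of `<⁺`. -/
abbrev Gen (S : PreOFS) (k : ℕ) (a b : S.F (k + 1)) : Prop :=
  ∃ α : S.F (k + 2), ¬ S.isLoop α ∧ Sum.inl a ∈ S.δ α ∧ S.γ α = b

lemma ltP_iff {k : ℕ} {a b : S.F (k + 1)} :
    S.ltP a b ↔ Relation.TransGen (Gen S k) a b := Iff.rfl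

lemma leP_trans {k : ℕ} {a b c : S.F (k + 1)} :
    S.leP a b → S.leP b c → S.leP a c := by
  rintro (rfl | h1) (rfl | h2)
  · exact Or.inl rfl
  · exact Or.inr h2
  · exact Or.inr h1
  · exact Or.inr (ltP_iff.mpr ((ltP_iff.mp h1).trans (ltP_iff.mp h2)))

lemma leP_antisymm (hS : IsOFS S) {k : ℕ} {a b : S.F (k + 1)} :
    S.leP a b → S.leP b a → a = b := by
  intro h1 h2
  rcases h1 with rfl | h1
  · rfl
  rcases h2 with rfl | h2
  · rfl
  exact absurd (ltP_iff.mpr ((ltP_iff.mp h1).trans (ltP_iff.mp h2))) (hS.strictP a)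

lemma map_gen (hS : IsOFS S) (hf : IsOFSHom S S f) {k : ℕ} {a b : S.F (k + 1)}
    (h : Gen S k a b) : S.leP (f (k + 1) a) (f (k + 1) b) := by
  obtain ⟨α, hnl, hmem, hγ⟩ := h
  have hmem' : f (k + 1) a ∈ S.realDom (f (k + 2) α) := (hf.map_dom α).mapsTo hmem
  have hγ' : S.γ (f (k + 2) α) = f (k + 1) b := by rw [← hf.map_γ α, hγ]
  by_cases hl : S.isLoop (f (k + 2) α)
  · left
    have h2 : Sum.inl (f (k + 1) a) ∈ S.δ (f (k + 2) α) := hmem'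
    rw [hl] at h2
    have h3 := Sum.inl.inj (Set.mem_singleton_iff.mp h2)
    rw [h3, hγ']
  · exact Or.inr (ltP_iff.mpr (Relation.TransGen.single ⟨f (k + 2) α, hl, hmem', hγ'⟩))

lemma map_ltP (hS : IsOFS S) (hf : IsOFSHom S S f) {k : ℕ} {a b : S.F (k + 1)}
    (h : S.ltP a b) : S.leP (f (k + 1) a) (f (k + 1) b) := by
  have h' := ltP_iff.mp h
  clear h
  induction h' with
  | single h'' => exact map_gen hS hf h''
  | tail _ h'' ih => exact leP_trans ih (map_gen hS hf h'')

lemma map_leP (hS : IsOFS S) (hf : IsOFSHom S S f) {k : ℕ} {a b : S.F (k + 1)}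
    (h : S.leP a b) : S.leP (f (k + 1) a) (f (k + 1) b) := by
  rcases h with rfl | h
  · exact Or.inl rfl
  · exact map_ltP hS hf h

lemma sim_chain_fwd (hS : IsOFS S) (hf : IsOFSHom S S f) {k : ℕ} {x : S.F (k + 1)}
    (h : S.sim x (f (k + 1) x)) : False := by
  haveI := hS.fin (k + 1)
  set g := f (k + 1) with hg
  have key : ∀ i, S.sim (g^[i] x) (g^[i + 1] x) := by
    intro i
    induction i with
    | zero => simpa using h
    | succ n ih =>
      have h2 := hf.map_sim _ _ ih
      simpa [hg, Function.iterate_succ_apply'] using h2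
  have chain : ∀ j i, i < j → S.sim (g^[i] x) (g^[j] x) := by
    intro j
    induction j with
    | zero => omega
    | succ n ih =>
      intro i hij
      rcases Nat.lt_succ_iff_lt_or_eq.mp hij with h' | h'
      · exact hS.sim_trans _ _ _ (ih i h') (key n)
      · subst h'; exact key i
  obtain ⟨i, j, hne, heq⟩ := Finite.exists_ne_map_eq_of_infinite (fun i => g^[i] x)
  rcases hne.lt_or_gt with h' | h'
  · have := chain j i h'
    rw [heq] at this
    exact hS.sim_irrefl _ this
  · have := chain i j h'
    rw [← heq] at this
    exact hS.sim_irrefl _ this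

lemma sim_chain_bwd (hS : IsOFS S) (hf : IsOFSHom S S f) {k : ℕ} {x : S.F (k + 1)}
    (h : S.sim (f (k + 1) x) x) : False := by
  haveI := hS.fin (k + 1)
  set g := f (k + 1) with hg
  have key : ∀ i, S.sim (g^[i + 1] x) (g^[i] x) := by
    intro i
    induction i with
    | zero => simpa using h
    | succ n ih =>
      have h2 := hf.map_sim _ _ ih
      simpa [hg, Function.iterate_succ_apply'] using h2
  have chain : ∀ j i, i < j → S.sim (g^[j] x) (g^[i] x) := by
    intro j
    induction j with
    | zero => omega
    | succ n ih =>
      intro i hij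
      rcases Nat.lt_succ_iff_lt_or_eq.mp hij with h' | h'
      · exact hS.sim_trans _ _ _ (key n) (ih i h')
      · subst h'; exact key i
  obtain ⟨i, j, hne, heq⟩ := Finite.exists_ne_map_eq_of_infinite (fun i => g^[i] x)
  rcases hne.lt_or_gt with h' | h'
  · have := chain j i h'
    rw [heq] at this
    exact hS.sim_irrefl _ this
  · have := chain i j h'
    rw [← heq] at this
    exact hS.sim_irrefl _ this

lemma no_perpS (hS : IsOFS S) (hf : IsOFSHom S S f) {k : ℕ} (x : S.F (k + 1)) :
    ¬ S.perpS x (f (k + 1) x) := by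
  rintro (h | h)
  · exact sim_chain_fwd hS hf h
  · exact sim_chain_bwd hS hf h

lemma loop_image (hS : IsOFS S) (hf : IsOFSHom S S f) {k : ℕ} {α : S.F (k + 2)}
    {p : S.F (k + 1)} (hmem : Sum.inl p ∈ S.δ α)
    (hγ : S.γ (f (k + 2) α) = f (k + 1) p) : S.isLoop (f (k + 2) α) := by
  by_contra hl
  have hmem' : f (k + 1) p ∈ S.realDom (f (k + 2) α) := (hf.map_dom α).mapsTo hmem
  exact hS.strictP (f (k + 1) p)
    (ltP_iff.mpr (Relation.TransGen.single ⟨f (k + 2) α, hl, hmem', hγ⟩))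

lemma rtg_le {k : ℕ} {a b : S.F (k + 1)} (h : Relation.ReflTransGen (Gen S k) a b) :
    S.leP a b := by
  induction h with
  | refl => exact Or.inl rfl
  | tail _ h' ih =>
      exact leP_trans ih (Or.inr (ltP_iff.mpr (Relation.TransGen.single h')))

lemma merge_step (hS : IsOFS S) (hf : IsOFSHom S S f) {k : ℕ} {d L : S.F (k + 1)}
    (hdL : S.ltP d L) (hfd : f (k + 1) d = L) (hfL : f (k + 1) L = L) :
    ∃ A : S.F (k + 2), f (k + 2) A ≠ A ∧ S.perpP A (f (k + 2) A) := by
  obtain ⟨e, hde, heL⟩ := Relation.TransGen.tail'_iff.mp (ltP_iff.mp hdL)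
  have hfe : f (k + 1) e = L := by
    have h1 : S.leP (f (k + 1) d) (f (k + 1) e) := map_leP hS hf (rtg_le hde)
    have h2 : S.leP (f (k + 1) e) (f (k + 1) L) :=
      map_leP hS hf (Or.inr (ltP_iff.mpr (Relation.TransGen.single heL)))
    rw [hfd] at h1; rw [hfL] at h2
    exact leP_antisymm hS h2 h1
  obtain ⟨α, hnl, hmem, hγ⟩ := heL
  have hγf : S.γ (f (k + 2) α) = f (k + 1) e := by
    rw [← hf.map_γ α, hγ, hfL, hfe]
  have hloop := loop_image hS hf hmem hγf
  have hne : f (k + 2) α ≠ α := fun h => hnl (h ▸ hloop)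
  have hγL : S.γ (f (k + 2) α) = L := by rw [hγf, hfe]
  have hcom : (S.thetaDot α ∩ S.thetaDot (f (k + 2) α)).Nonempty := by
    refine ⟨L, ?_, ?_⟩
    · rw [← hγ]; exact Set.mem_insert _ _
    · rw [← hγL]; exact Set.mem_insert _ _
  rcases hS.pencil₁ α (f (k + 2) α) (Ne.symm hne) hcom with hps | hpp
  · exact absurd hps (no_perpS hS hf α)
  · exact ⟨α, hne, hpp⟩

lemma merge_step' (hS : IsOFS S) (hf : IsOFSHom S S f) {k : ℕ} {L d : S.F (k + 1)}
    (hLd : S.ltP L d) (hfd : f (k + 1) d = L) (hfL : f (k + 1) L = L) :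
    ∃ A : S.F (k + 2), f (k + 2) A ≠ A ∧ S.perpP A (f (k + 2) A) := by
  obtain ⟨e, hLe, hed⟩ := Relation.TransGen.head'_iff.mp (ltP_iff.mp hLd)
  have hfe : f (k + 1) e = L := by
    have h1 : S.leP (f (k + 1) L) (f (k + 1) e) :=
      map_leP hS hf (Or.inr (ltP_iff.mpr (Relation.TransGen.single hLe)))
    have h2 : S.leP (f (k + 1) e) (f (k + 1) d) := map_leP hS hf (rtg_le hed)
    rw [hfL] at h1; rw [hfd] at h2
    exact leP_antisymm hS h2 h1
  obtain ⟨α, hnl, hmem, hγ⟩ := hLe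
  have hγf : S.γ (f (k + 2) α) = f (k + 1) L := by
    rw [← hf.map_γ α, hγ, hfe, hfL]
  have hloop := loop_image hS hf hmem hγf
  have hne : f (k + 2) α ≠ α := fun h => hnl (h ▸ hloop)
  have hγL : S.γ (f (k + 2) α) = L := by rw [hγf, hfL]
  have hcom : (S.thetaDot α ∩ S.thetaDot (f (k + 2) α)).Nonempty := by
    refine ⟨L, Set.mem_insert_of_mem _ hmem, ?_⟩
    rw [← hγL]; exact Set.mem_insert _ _
  rcases hS.pencil₁ α (f (k + 2) α) (Ne.symm hne) hcom with hps | hpp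
  · exact absurd hps (no_perpS hS hf α)
  · exact ⟨α, hne, hpp⟩

lemma stab_incr (hS : IsOFS S) (hf : IsOFSHom S S f) {k : ℕ} {x : S.F (k + 1)}
    (hle : S.leP x (f (k + 1) x)) (hne : f (k + 1) x ≠ x) :
    ∃ d L : S.F (k + 1), S.ltP d L ∧ f (k + 1) d = L ∧ f (k + 1) L = L := by
  classical
  haveI := hS.fin (k + 1)
  set g := f (k + 1) with hg
  have mono : ∀ i, S.leP (g^[i] x) (g^[i + 1] x) := by
    intro i
    induction i with
    | zero => simpa using hle
    | succ n ih =>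
      have h2 := map_leP hS hf ih
      simpa [hg, Function.iterate_succ_apply'] using h2
  have chain : ∀ j i, i ≤ j → S.leP (g^[i] x) (g^[j] x) := by
    intro j
    induction j with
    | zero =>
      intro i hi
      have h0 : i = 0 := by omega
      subst h0; exact Or.inl rfl
    | succ n ih =>
      intro i hi
      rcases Nat.lt_succ_iff_lt_or_eq.mp (Nat.lt_succ_of_le hi) with h' | h'
      · exact leP_trans (ih i (by omega)) (mono n)
      · subst h'; exact Or.inl rfl
  have hQex : ∃ i, g (g^[i] x) = g^[i] x := by
    obtain ⟨i, j, hij, heq⟩ := Finite.exists_ne_map_eq_of_infinite (fun i => g^[i] x)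
    rcases hij.lt_or_gt with h' | h'
    · refine ⟨i, ?_⟩
      have h1 : S.leP (g^[i + 1] x) (g^[i] x) := by
        have h2 := chain j (i + 1) h'
        rw [← heq] at h2
        exact h2
      have h3 : g^[i + 1] x = g^[i] x := leP_antisymm hS h1 (mono i)
      rw [Function.iterate_succ_apply'] at h3
      exact h3
    · refine ⟨j, ?_⟩
      have h1 : S.leP (g^[j + 1] x) (g^[j] x) := by
        have h2 := chain i (j + 1) h'
        rw [heq] at h2
        exact h2
      have h3 : g^[j + 1] x = g^[j] x := leP_antisymm hS h1 (mono j)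
      rw [Function.iterate_succ_apply'] at h3
      exact h3
  have hm0 : Nat.find hQex ≠ 0 := by
    intro h0
    have hsp := Nat.find_spec hQex
    rw [h0] at hsp
    simp only [Function.iterate_zero, id_eq] at hsp
    exact hne hsp
  obtain ⟨n, hn⟩ : ∃ n, Nat.find hQex = n + 1 := ⟨Nat.find hQex - 1, by omega⟩
  have e1 : g (g^[n] x) = g^[Nat.find hQex] x := by
    rw [hn, Function.iterate_succ_apply']
  refine ⟨g^[n] x, g^[Nat.find hQex] x, ?_, e1, Nat.find_spec hQex⟩
  have h1 : S.leP (g^[n] x) (g^[Nat.find hQex] x) := by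
    rw [hn]; exact mono n
  rcases h1 with h1 | h1
  · exfalso
    have hQn : g (g^[n] x) = g^[n] x := by rw [e1, ← h1]
    exact Nat.find_min hQex (by omega) hQn
  · exact h1

lemma stab_decr (hS : IsOFS S) (hf : IsOFSHom S S f) {k : ℕ} {x : S.F (k + 1)}
    (hle : S.leP (f (k + 1) x) x) (hne : f (k + 1) x ≠ x) :
    ∃ L d : S.F (k + 1), S.ltP L d ∧ f (k + 1) d = L ∧ f (k + 1) L = L := by
  classical
  haveI := hS.fin (k + 1)
  set g := f (k + 1) with hg
  have mono : ∀ i, S.leP (g^[i + 1] x) (g^[i] x) := by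
    intro i
    induction i with
    | zero => simpa using hle
    | succ n ih =>
      have h2 := map_leP hS hf ih
      simpa [hg, Function.iterate_succ_apply'] using h2
  have chain : ∀ j i, i ≤ j → S.leP (g^[j] x) (g^[i] x) := by
    intro j
    induction j with
    | zero =>
      intro i hi
      have h0 : i = 0 := by omega
      subst h0; exact Or.inl rfl
    | succ n ih =>
      intro i hi
      rcases Nat.lt_succ_iff_lt_or_eq.mp (Nat.lt_succ_of_le hi) with h' | h'
      · exact leP_trans (mono n) (ih i (by omega))
      · subst h'; exact Or.inl rfl
  have hQex : ∃ i, g (g^[i] x) = g^[i] x := by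
    obtain ⟨i, j, hij, heq⟩ := Finite.exists_ne_map_eq_of_infinite (fun i => g^[i] x)
    rcases hij.lt_or_gt with h' | h'
    · refine ⟨i, ?_⟩
      have h1 : S.leP (g^[i] x) (g^[i + 1] x) := by
        have h2 := chain j (i + 1) h'
        rw [← heq] at h2
        exact h2
      have h3 : g^[i + 1] x = g^[i] x := leP_antisymm hS (mono i) h1
      rw [Function.iterate_succ_apply'] at h3
      exact h3
    · refine ⟨j, ?_⟩
      have h1 : S.leP (g^[j] x) (g^[j + 1] x) := by
        have h2 := chain i (j + 1) h'
        rw [heq] at h2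
        exact h2
      have h3 : g^[j + 1] x = g^[j] x := leP_antisymm hS (mono j) h1
      rw [Function.iterate_succ_apply'] at h3
      exact h3
  have hm0 : Nat.find hQex ≠ 0 := by
    intro h0
    have hsp := Nat.find_spec hQex
    rw [h0] at hsp
    simp only [Function.iterate_zero, id_eq] at hsp
    exact hne hsp
  obtain ⟨n, hn⟩ : ∃ n, Nat.find hQex = n + 1 := ⟨Nat.find hQex - 1, by omega⟩
  have e1 : g (g^[n] x) = g^[Nat.find hQex] x := by
    rw [hn, Function.iterate_succ_apply']
  refine ⟨g^[Nat.find hQex] x, g^[n] x, ?_, e1, Nat.find_spec hQex⟩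
  have h1 : S.leP (g^[Nat.find hQex] x) (g^[n] x) := by
    rw [hn]; exact mono n
  rcases h1 with h1 | h1
  · exfalso
    have hQn : g (g^[n] x) = g^[n] x := by rw [e1, h1]
    exact Nat.find_min hQex (by omega) hQn
  · exact h1

lemma propagate (hS : IsOFS S) (hf : IsOFSHom S S f) {k : ℕ}
    (h : ∃ x : S.F (k + 1), f (k + 1) x ≠ x ∧ S.perpP x (f (k + 1) x)) :
    ∃ A : S.F (k + 2), f (k + 2) A ≠ A ∧ S.perpP A (f (k + 2) A) := by
  obtain ⟨x, hne, hp⟩ := h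
  rcases hp with h | h
  · obtain ⟨d, L, h1, h2, h3⟩ := stab_incr hS hf (Or.inr h) hne
    exact merge_step hS hf h1 h2 h3
  · obtain ⟨L, d, h1, h2, h3⟩ := stab_decr hS hf (Or.inr h) hne
    exact merge_step' hS hf h1 h2 h3

lemma base_zero (hS : IsOFS S) {x : S.F 1} (hx : f 1 x ≠ x) :
    S.perpP x (f 1 x) := by
  rcases hS.linearP₀ x (f 1 x) with h | h | h
  · exact absurd h.symm hx
  · exact Or.inl h
  · exact Or.inr h

lemma base_succ (hS : IsOFS S) (hf : IsOFSHom S S f) {m : ℕ} {x : S.F (m + 2)}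
    (hx : f (m + 2) x ≠ x) (hfix : ∀ y : S.F (m + 1), f (m + 1) y = y) :
    S.perpP x (f (m + 2) x) := by
  have hγ : S.γ (f (m + 2) x) = S.γ x := by
    rw [← hf.map_γ x]; exact hfix _
  have hcom : (S.thetaDot x ∩ S.thetaDot (f (m + 2) x)).Nonempty :=
    ⟨S.γ x, Set.mem_insert _ _, by rw [← hγ]; exact Set.mem_insert _ _⟩
  rcases hS.pencil₁ x (f (m + 2) x) (Ne.symm hx) hcom with hps | hpp
  · exact absurd hps (no_perpS hS hf x)
  · exact hpp

end Stmt15Aux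

/-- every monotone endomorphism of an ordered face structure is
the identity. -/
theorem stmt15 (S : PreOFS) (hS : IsOFS S) (f : ∀ k, S.F k → S.F k)
    (hf : IsOFSHom S S f) : ∀ (k : ℕ) (x : S.F k), f k x = x := by
  classical
  by_contra hcon
  push_neg at hcon
  obtain ⟨k0, x0, hx0⟩ := hcon
  have hex : ∃ m, ∃ x : S.F (m + 1), f (m + 1) x ≠ x := by
    cases k0 with
    | zero => exact (hS.empty_bot.false x0).elim
    | succ m => exact ⟨m, x0, hx0⟩
  have hmin : ∀ j, j < Nat.find hex → ∀ y : S.F (j + 1), f (j + 1) y = y := by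
    intro j hj y
    by_contra hy
    exact Nat.find_min hex hj ⟨y, hy⟩
  have key : ∀ m, (∀ j, j < m → ∀ y : S.F (j + 1), f (j + 1) y = y) →
      ∀ x : S.F (m + 1), f (m + 1) x ≠ x → S.perpP x (f (m + 1) x) := by
    intro m
    cases m with
    | zero => intro _ x hx; exact Stmt15Aux.base_zero hS hx
    | succ n => intro hfix x hx; exact Stmt15Aux.base_succ hS hf hx (hfix n (by omega))
  have P0 : ∃ x : S.F (Nat.find hex + 1),
      f (Nat.find hex + 1) x ≠ x ∧ S.perpP x (f (Nat.find hex + 1) x) := by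
    obtain ⟨a, ha⟩ := Nat.find_spec hex
    exact ⟨a, ha, key (Nat.find hex) hmin a ha⟩
  have Pall : ∀ i, ∃ x : S.F (Nat.find hex + i + 1),
      f (Nat.find hex + i + 1) x ≠ x ∧ S.perpP x (f (Nat.find hex + i + 1) x) := by
    intro i
    induction i with
    | zero => exact P0
    | succ n ih => exact Stmt15Aux.propagate hS hf ih
  obtain ⟨n, hn⟩ := hS.bdd
  obtain ⟨x, -, -⟩ := Pall (n + 1)
  exact (hn (Nat.find hex + (n + 1) + 1) (by omega)).false x
end
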